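/- arXiv:math/0409538 — 3 statements merged into one kernel-verified Lean document; each statement's English description precedes it below -/
import Mathlib

section
/- Let μ be a partition and D ⊆ {(i,j) ∈ dg(μ) : i > 1}. Let ν(μ,D) = (ν^(1),…,ν^(k)) be the tuple of ribbons where k = μ_1 and ν^(j) is the unique ribbon with cell contents {1,2,…,μ'_j} and descent set {i : (i,j) ∈ D}. Then for every N ≥ 1, F_{μ,D}(x_1,…,x_N;q) := Σ_{σ : dg(μ) → {1,…,N}, Des(σ) = D} q^{|Inv(σ)|} x^σ equals the LLT polynomial G_{ν(μ,D)}(x_1,…,x_N;q) = Σ_{T ∈ SSYT(ν(μ,D)), entries ≤ N} q^{inv(T)} x^T. -/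
open Finset MvPolynomial

namespace HHL

/-! ### Diagrams, fillings and the statistics `inv` and `maj` -/

/-- The cells of the Young diagram of the partition `μ` (given as the list of
its row lengths `μ_1, μ_2, …`); the cell `(i,j)` lies in row `i` (from the
bottom, French style) and column `j`, with `1 ≤ i ≤ ℓ(μ)`, `1 ≤ j ≤ μ_i`. -/
def cells (μ : List ℕ) : Finset (ℕ × ℕ) :=
  (Finset.Icc 1 μ.length ×ˢ Finset.Icc 1 (μ.foldr max 0)).filter
    (fun u => u.2 ≤ μ.getD (u.1 - 1) 0)

/-- `μ` is a partition: a weakly decreasing list of positive integers. -/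
def IsPartitionList (μ : List ℕ) : Prop := μ.Pairwise (· ≥ ·) ∧ ∀ x ∈ μ, 0 < x

/-- The arm of a cell: the number of cells strictly to its right in its row. -/
def arm (μ : List ℕ) (u : ℕ × ℕ) : ℕ :=
  ((cells μ).filter (fun v => v.1 = u.1 ∧ u.2 < v.2)).card

/-- The leg of a cell: the number of cells strictly above it in its column. -/
def leg (μ : List ℕ) (u : ℕ × ℕ) : ℕ :=
  ((cells μ).filter (fun v => v.2 = u.2 ∧ u.1 < v.1)).card

/-- `u` precedes `v` in the reading order (row by row from the top row down,
left to right within each row). -/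
def ReadBefore (u v : ℕ × ℕ) : Prop := v.1 < u.1 ∨ (u.1 = v.1 ∧ u.2 < v.2)

instance (u v : ℕ × ℕ) : Decidable (ReadBefore u v) := by
  unfold ReadBefore; infer_instance

/-- `u` and `v` attack each other and `u` precedes `v` in reading order: either
they are in the same row with `u` to the left, or `u` is one row above `v` and
strictly to its right. -/
def AttackOrd (u v : ℕ × ℕ) : Prop :=
  (u.1 = v.1 ∧ u.2 < v.2) ∨ (u.1 = v.1 + 1 ∧ v.2 < u.2)

instance (u v : ℕ × ℕ) : Decidable (AttackOrd u v) := by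
  unfold AttackOrd; infer_instance

/-- `u` and `v` attack each other. -/
def Attack (u v : ℕ × ℕ) : Prop := AttackOrd u v ∨ AttackOrd v u

instance (u v : ℕ × ℕ) : Decidable (Attack u v) := by
  unfold Attack; infer_instance

section Stats

variable {V : Type} (μ : List ℕ) (Ind : V → V → Prop) [DecidableRel Ind] (σ : ℕ × ℕ → V)

/-- The set `Inv(σ)` of inversions of a filling `σ`, recorded as ordered pairs
`(u,v)` with `u` attacking `v`, `u` preceding `v` in reading order, and
`I(σ(u),σ(v)) = 1`; here `Ind x y` means `I(x,y) = 1` (for ordinary fillings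
`Ind x y ↔ x > y`). -/
def invPairs : Finset ((ℕ × ℕ) × (ℕ × ℕ)) :=
  ((cells μ) ×ˢ (cells μ)).filter fun p => AttackOrd p.1 p.2 ∧ Ind (σ p.1) (σ p.2)

/-- The descent set `Des(σ)`: cells `u = (i+1,j)` with `v = (i,j) ∈ dg(μ)` and
`I(σ(u),σ(v)) = 1`. -/
def desCells : Finset (ℕ × ℕ) :=
  (cells μ).filter fun u => (u.1 - 1, u.2) ∈ cells μ ∧ Ind (σ u) (σ (u.1 - 1, u.2))

/-- `maj(σ) = Σ_{u ∈ Des(σ)} (leg(u) + 1)`. -/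
def majStat : ℕ := ∑ u ∈ desCells μ Ind σ, (leg μ u + 1)

/-- `inv(σ) = |Inv(σ)| − Σ_{u ∈ Des(σ)} arm(u)`. -/
def invStat : ℕ := (invPairs μ Ind σ).card - ∑ u ∈ desCells μ Ind σ, arm μ u

end Stats

/-- For ordinary (positive-integer valued) fillings, `I(x,y) = 1` iff `x > y`. -/
def natInd : ℕ → ℕ → Prop := fun x y => y < x

instance : DecidableRel natInd := fun _ _ => by unfold natInd; infer_instance

/-- Extend a function defined on the cells of `μ` to a total function. -/
def extendF {V : Type} (μ : List ℕ) (d : V) (f : {u // u ∈ cells μ} → V) : ℕ × ℕ → V :=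
  fun u => if h : u ∈ cells μ then f ⟨u, h⟩ else d

/-- A filling of `dg(μ)` with entries in `{1, …, N}`, encoded by a function to
`Fin N` (value `k` means the entry `k + 1`), as a total function `ℕ × ℕ → ℕ`. -/
def natFill (μ : List ℕ) {N : ℕ} (f : {u // u ∈ cells μ} → Fin N) : ℕ × ℕ → ℕ :=
  extendF μ 0 fun u => (f u).val + 1

/-- Haglund's combinatorial formula
`C_μ(x_1,…,x_N;q,t) = Σ_σ q^{inv(σ)} t^{maj(σ)} x^σ`, a polynomial in
`x_1,…,x_N` with coefficients in `ℤ[q,t]`, where `q = C (X 0)`, `t = C (X 1)`. -/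
noncomputable def Cmu (μ : List ℕ) (N : ℕ) :
    MvPolynomial (Fin N) (MvPolynomial (Fin 2) ℤ) :=
  ∑ f : {u // u ∈ cells μ} → Fin N,
    C ((X 0 : MvPolynomial (Fin 2) ℤ) ^ invStat μ natInd (natFill μ f) *
       (X 1 : MvPolynomial (Fin 2) ℤ) ^ majStat μ natInd (natFill μ f)) *
    ∏ u, X (f u)

/-! ### Skew diagrams and LLT polynomials -/

/-- A pair of partitions `(λ, μ)` with `μ ⊆ λ`, representing the skew diagram
`λ∖μ`. -/
def IsSkewPair (p : List ℕ × List ℕ) : Prop :=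
  IsPartitionList p.1 ∧ IsPartitionList p.2 ∧ ∀ i, p.2.getD i 0 ≤ p.1.getD i 0

/-- The cells of the skew diagram `λ∖μ`. -/
def skewCells (p : List ℕ × List ℕ) : Finset (ℕ × ℕ) := cells p.1 \ cells p.2

/-- The content `c(u) = i − j` of the cell `u = (i,j)`. -/
def content (u : ℕ × ℕ) : ℤ := (u.1 : ℤ) - (u.2 : ℤ)

/-- The disjoint union of the cells of a tuple of skew diagrams. -/
abbrev TDom {k : ℕ} (ν : Fin k → List ℕ × List ℕ) : Type :=
  Σ i : Fin k, {u // u ∈ skewCells (ν i)}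

/-- `f` (with `f ⟨i,u⟩` the entry of the `i`-th tableau at the cell `u`) is a
tuple of semistandard Young tableaux: entries weakly increasing along each row
and strictly increasing up each column. -/
def IsSSYTtuple {k : ℕ} (ν : Fin k → List ℕ × List ℕ) (f : TDom ν → ℕ) : Prop :=
  ∀ i : Fin k, ∀ u v : {u // u ∈ skewCells (ν i)},
    (u.1.1 = v.1.1 ∧ u.1.2 ≤ v.1.2 → f ⟨i, u⟩ ≤ f ⟨i, v⟩) ∧
    (u.1.2 = v.1.2 ∧ u.1.1 < v.1.1 → f ⟨i, u⟩ < f ⟨i, v⟩)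

instance {k : ℕ} (ν : Fin k → List ℕ × List ℕ) (f : TDom ν → ℕ) :
    Decidable (IsSSYTtuple ν f) := by unfold IsSSYTtuple; infer_instance

/-- The number of inversions of a tuple of tableaux: pairs of entries
`T^(i)(u) > T^(j)(v)` with either `i < j` and `c(u) = c(v)`, or `i > j` and
`c(u) = c(v) + 1`. -/
def lltInv {k : ℕ} (ν : Fin k → List ℕ × List ℕ) (f : TDom ν → ℕ) : ℕ :=
  (Finset.univ.filter fun p : TDom ν × TDom ν =>
    ((p.1.1 < p.2.1 ∧ content p.1.2.1 = content p.2.2.1) ∨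
     (p.2.1 < p.1.1 ∧ content p.1.2.1 = content p.2.2.1 + 1)) ∧
    f p.2 < f p.1).card

/-- The LLT polynomial `G_ν(x_1,…,x_N;q) = Σ_T q^{inv(T)} x^T` in `N`
variables, with coefficients in `ℤ[q]` (`q = C Polynomial.X`); tableau entries
in `{1,…,N}` are encoded by `Fin N` (value `k` means entry `k + 1`). -/
noncomputable def llt {k : ℕ} (ν : Fin k → List ℕ × List ℕ) (N : ℕ) :
    MvPolynomial (Fin N) (Polynomial ℤ) :=
  ∑ f ∈ Finset.univ.filter (fun f : TDom ν → Fin N =>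
      IsSSYTtuple ν (fun a => (f a).val + 1)),
    C (Polynomial.X ^ lltInv ν (fun a => (f a).val + 1)) * ∏ a, X (f a)

/-! ### The super alphabet -/

/-- The super alphabet `A = {1, 1̄, 2, 2̄, …}`: the letter `(a, b)` has absolute
value `a + 1` and is negative (barred) iff `b = true`. -/
abbrev SLetter : Type := ℕ × Bool

/-- The absolute value of a super letter. -/
def sAbs (x : SLetter) : ℕ := x.1 + 1

/-- The ordering `<₁`: `1 < 1̄ < 2 < 2̄ < ⋯`. -/
def lt1 (x y : SLetter) : Prop :=
  x.1 < y.1 ∨ (x.1 = y.1 ∧ x.2 = false ∧ y.2 = true)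

instance : DecidableRel lt1 := fun _ _ => by unfold lt1; infer_instance

/-- The ordering `<₂`: `1 < 2 < 3 < ⋯ < 3̄ < 2̄ < 1̄`. -/
def lt2 (x y : SLetter) : Prop :=
  (x.2 = false ∧ y.2 = false ∧ x.1 < y.1) ∨ (x.2 = false ∧ y.2 = true) ∨
    (x.2 = true ∧ y.2 = true ∧ y.1 < x.1)

instance : DecidableRel lt2 := fun _ _ => by unfold lt2; infer_instance

/-- Given a total order `lt` on the super alphabet, `IndOf lt x y` holds iff
`I(x,y) = 1`, i.e. `x > y`, or `x = y` is a negative letter. -/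
def IndOf (lt : SLetter → SLetter → Prop) (x y : SLetter) : Prop :=
  lt y x ∨ (x = y ∧ x.2 = true)

instance (lt : SLetter → SLetter → Prop) [DecidableRel lt] : DecidableRel (IndOf lt) :=
  fun _ _ => by unfold IndOf; infer_instance

/-- A super filling of `dg(μ)` with letters of absolute value at most `N`, as a
total function (the value `(a, b)` with `a : Fin N` means the letter of
absolute value `a + 1`, barred iff `b`). -/
def superFill (μ : List ℕ) {N : ℕ} (f : {u // u ∈ cells μ} → Fin N × Bool) :
    ℕ × ℕ → SLetter :=
  extendF μ (0, false) fun u => ((f u).1.val, (f u).2)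

/-- A super filling with entries in `{1, 1̄}` (`f u = true` means entry `1̄`). -/
def boolFill (μ : List ℕ) (f : {u // u ∈ cells μ} → Bool) : ℕ × ℕ → SLetter :=
  extendF μ (0, false) fun u => ((0 : ℕ), f u)

/-- `m(σ)`: the number of negative entries of a super filling. -/
def negCount (μ : List ℕ) (σ : ℕ × ℕ → SLetter) : ℕ :=
  ((cells μ).filter fun u => (σ u).2 = true).card

/-- `p(σ)`: the number of positive entries of a super filling. -/
def posCount (μ : List ℕ) (σ : ℕ × ℕ → SLetter) : ℕ :=
  ((cells μ).filter fun u => (σ u).2 = false).card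

/-- A super filling is non-attacking if entries in attacking cells have
distinct absolute values. -/
def NonAttacking (μ : List ℕ) (σ : ℕ × ℕ → SLetter) : Prop :=
  ∀ u ∈ cells μ, ∀ v ∈ cells μ, Attack u v → sAbs (σ u) ≠ sAbs (σ v)

instance (μ : List ℕ) (σ : ℕ × ℕ → SLetter) : Decidable (NonAttacking μ σ) := by
  unfold NonAttacking; infer_instance

/-! ### Conjugate partitions, ribbons, connectivity -/

/-- `conj μ j = μ'_j`, the number of rows of `μ` of length at least `j`. -/
def conj (μ : List ℕ) (j : ℕ) : ℕ :=
  ((Finset.range μ.length).filter fun i => j ≤ μ.getD i 0).card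

/-- The transpose `μ'` of a partition, as a list. -/
def conjList (μ : List ℕ) : List ℕ :=
  (List.range (μ.foldr max 0)).map fun j => conj μ (j + 1)

/-- Transpose of a skew shape: `λ∖μ ↦ λ'∖μ'`. -/
def transposePair (p : List ℕ × List ℕ) : List ℕ × List ℕ :=
  (conjList p.1, conjList p.2)

/-- Two cells are adjacent (share an edge). -/
def AdjCell (u v : ℕ × ℕ) : Prop :=
  (u.1 = v.1 ∧ (u.2 = v.2 + 1 ∨ v.2 = u.2 + 1)) ∨
  (u.2 = v.2 ∧ (u.1 = v.1 + 1 ∨ v.1 = u.1 + 1))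

/-- A set of cells is connected (any two cells are joined by a path of
edge-adjacent cells inside the set). -/
def ConnSet (s : Finset (ℕ × ℕ)) : Prop :=
  ∀ u ∈ s, ∀ v ∈ s, Relation.ReflTransGen (fun a b => a ∈ s ∧ b ∈ s ∧ AdjCell a b) u v

/-- A set of cells contains no 2×2 block. -/
def No2x2 (s : Finset (ℕ × ℕ)) : Prop :=
  ¬ ∃ i j, (i, j) ∈ s ∧ (i + 1, j) ∈ s ∧ (i, j + 1) ∈ s ∧ (i + 1, j + 1) ∈ s

/-! ### Reading words and cocharge -/

/-- Boolean comparison realizing the reading order. -/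
def readLe (u v : ℕ × ℕ) : Bool :=
  decide (v.1 < u.1) || (decide (u.1 = v.1) && decide (u.2 ≤ v.2))

/-- The reading word of a filling `σ` of `dg(μ)`: its entries listed in reading
order. -/
noncomputable def readingWord (μ : List ℕ) (σ : ℕ × ℕ → ℕ) : List ℕ :=
  ((cells μ).toList.mergeSort readLe).map σ

/-- Boolean comparison for the cocharge-word ordering of the cells: entries of
`σ` decreasing and, within constant segments of `σ`, cells in decreasing
reading order. -/
def cwordLe (σ : ℕ × ℕ → ℕ) (u v : ℕ × ℕ) : Bool :=
  decide (σ v < σ u) ||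
    (decide (σ u = σ v) &&
      (decide (u.1 < v.1) || (decide (u.1 = v.1) && decide (v.2 ≤ u.2))))

/-- The cocharge word of a filling: the row indices of the cells, listed so that
the entries are decreasing, with ties broken by decreasing reading order. -/
noncomputable def cword (μ : List ℕ) (σ : ℕ × ℕ → ℕ) : List ℕ :=
  ((cells μ).toList.mergeSort (cwordLe σ)).map Prod.fst

/-- Cocharge of a word that is a permutation of `{1,…,n}`:
`Σ_{i ∈ D(w⁻¹)} (n − i)`, where `i ∈ D(w⁻¹)` iff `i + 1` occurs before `i`. -/
def cochargePerm (w : List ℕ) : ℕ :=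
  ∑ i ∈ Finset.Icc 1 (w.length - 1),
    if w.idxOf (i + 1) < w.idxOf i then w.length - i else 0

/-- The (0-based) positions of the letter `a` in `w`. -/
def letterPositions (w : List ℕ) (a : ℕ) : Finset ℕ :=
  (Finset.range w.length).filter fun k => w.getD k 0 = a

/-- The position `k_i` for the letter `a`: the rightmost occurrence of `a`
strictly to the left of `bound` if there is one, otherwise the rightmost
occurrence of `a`. -/
def choosePos (w : List ℕ) (a : ℕ) (bound : Option ℕ) : Option ℕ :=
  match bound with
  | none => (letterPositions w a).max
  | some b =>
      let s := (letterPositions w a).filter (· < b)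
      if s.Nonempty then s.max else (letterPositions w a).max

/-- `posListAux w i = [k_i, k_{i-1}, …, k_1]` (as options). -/
def posListAux (w : List ℕ) : ℕ → List (Option ℕ)
  | 0 => []
  | i + 1 =>
      let rest := posListAux w i
      choosePos w (i + 1) (rest.headD none) :: rest

/-- The set `S = {k_1, …, k_l}` of positions extracted in the cocharge
recursion, where `l` is the largest letter of `w`. -/
def extractSet (w : List ℕ) : Finset ℕ :=
  ((posListAux w (w.foldr max 0)).filterMap id).toFinset

/-- The subword of `w` at the positions in `S` (in increasing position order). -/
def subwordOn (w : List ℕ) (S : Finset ℕ) : List ℕ :=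
  ((List.range w.length).filter fun k => decide (k ∈ S)).map fun k => w.getD k 0

/-- The subword of `w` at the positions *not* in `S`. -/
def subwordOff (w : List ℕ) (S : Finset ℕ) : List ℕ :=
  ((List.range w.length).filter fun k => decide (k ∉ S)).map fun k => w.getD k 0

/-- Fuelled cocharge recursion: `cocharge w = cocharge y + cocharge z`, where
`y` is the extracted subword (a permutation of `{1,…,l}`) and `z` is the
complementary subword. -/
def cochargeAux : ℕ → List ℕ → ℕ
  | 0, _ => 0
  | fuel + 1, w =>
      let S := extractSet w
      let z := subwordOff w S
      if z.length < w.length then cochargePerm (subwordOn w S) + cochargeAux fuel z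
      else cochargePerm (subwordOn w S)

/-- The cocharge of a word of partition content. -/
def cocharge (w : List ℕ) : ℕ := cochargeAux w.length w

/-! ### Yamanouchi words and crystal operators -/

/-- A word is Yamanouchi if every final segment contains at least as many
letters `i` as letters `i + 1`, for every `i ≥ 1`. -/
def IsYamanouchi (w : List ℕ) : Prop :=
  ∀ k i, ((w.drop k).count (i + 2)) ≤ ((w.drop k).count (i + 1))

noncomputable instance : DecidablePred IsYamanouchi := fun _ => Classical.propDecidable _

/-- The letters `i` (close, `false`) and `i + 1` (open, `true`) of `w`, as a
list of (position, is-open) tokens in position order. -/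
def tokens (i : ℕ) (w : List ℕ) : List (ℕ × Bool) :=
  (List.range w.length).filterMap fun k =>
    if w.getD k 0 = i + 1 then some (k, true)
    else if w.getD k 0 = i then some (k, false) else none

/-- Stack pass performing the repeated deletion of adjacent matched pairs (an
`i + 1` immediately followed by an `i` in the current subword). The first
argument is the (reversed) list of surviving tokens so far. -/
def reduceTokens : List (ℕ × Bool) → List (ℕ × Bool) → List (ℕ × Bool)
  | acc, [] => acc.reverse
  | a :: acc', t :: rest =>
      if a.2 ∧ ¬ t.2 then reduceTokens acc' rest
      else reduceTokens (t :: a :: acc') rest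
  | [], t :: rest => reduceTokens [t] rest

/-- The surviving letters of `{i, i + 1}` in `w` after matched-pair deletion. -/
def survivors (i : ℕ) (w : List ℕ) : List (ℕ × Bool) := reduceTokens [] (tokens i w)

/-- The crystal raising operator `E_i` on words: change the first surviving
(unmatched) letter `i + 1` to `i`; `none` encodes `E_i w = 0`. -/
def crystalE (i : ℕ) (w : List ℕ) : Option (List ℕ) :=
  match (survivors i w).find? (fun t => t.2) with
  | none => none
  | some t => some (w.set t.1 i)

/-! ### Straight-shape tableaux and Schur polynomials -/

/-- Semistandard tableau condition for a filling of the cells of `lam`. -/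
def IsSSYTcells (lam : List ℕ) (T : {u // u ∈ cells lam} → ℕ) : Prop :=
  ∀ u v : {u // u ∈ cells lam},
    (u.1.1 = v.1.1 ∧ u.1.2 ≤ v.1.2 → T u ≤ T v) ∧
    (u.1.2 = v.1.2 ∧ u.1.1 < v.1.1 → T u < T v)

instance (lam : List ℕ) (T : {u // u ∈ cells lam} → ℕ) :
    Decidable (IsSSYTcells lam T) := by unfold IsSSYTcells; infer_instance

/-- The Schur polynomial `s_λ(x_1,…,x_N) = Σ_{T ∈ SSYT(λ), entries ≤ N} x^T`,
with coefficients in a commutative ring `R`. -/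
noncomputable def schurPoly (R : Type) [CommRing R] (lam : List ℕ) (N : ℕ) :
    MvPolynomial (Fin N) R :=
  ∑ T ∈ Finset.univ.filter (fun T : {u // u ∈ cells lam} → Fin N =>
      IsSSYTcells lam (fun u => (T u).val + 1)),
    ∏ u, X (T u)

/-- The decreasing list of parts of `p : Nat.Partition n`. -/
def partnList {n : ℕ} (p : n.Partition) : List ℕ :=
  (Multiset.sort p.parts (· ≤ ·)).reverse


/-- `F_{μ,D}(x_1,…,x_N;q) = Σ_{σ : dg(μ)→{1,…,N}, Des(σ) = D} q^{|Inv(σ)|} x^σ`,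
with coefficients in `ℤ[q]`. -/
noncomputable def Fmu (μ : List ℕ) (D : Finset (ℕ × ℕ)) (N : ℕ) :
    MvPolynomial (Fin N) (Polynomial ℤ) :=
  ∑ f ∈ Finset.univ.filter (fun f : {u // u ∈ cells μ} → Fin N =>
      desCells μ natInd (natFill μ f) = D),
    C (Polynomial.X ^ (invPairs μ natInd (natFill μ f)).card) * ∏ u, X (f u)

/-- `p` is a ribbon (a connected skew diagram with no 2×2 block) positioned so
that its cell contents are exactly `1, 2, …, m`. -/
def IsRibbonWithContents (p : List ℕ × List ℕ) (m : ℕ) : Prop :=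
  IsSkewPair p ∧ ConnSet (skewCells p) ∧ No2x2 (skewCells p) ∧
    (skewCells p).card = m ∧ (skewCells p).image content = Finset.Icc (1 : ℤ) (m : ℤ)

/-- The descent set of a ribbon: the contents of the cells `u = (i,j)` such
that `(i−1,j)` also belongs to the ribbon. -/
def ribbonDes (p : List ℕ × List ℕ) : Finset ℤ :=
  ((skewCells p).filter fun u => (u.1 - 1, u.2) ∈ skewCells p).image content

lemma le_foldr_max {l : List ℕ} {x : ℕ} (hx : x ∈ l) : x ≤ l.foldr max 0 := by
  induction l with
  | nil => cases hx
  | cons a t ih =>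
      rcases List.mem_cons.mp hx with h | h
      · simp [h]
      · exact le_trans (ih h) (le_max_right _ _)

lemma mem_cells {μ : List ℕ} {u : ℕ × ℕ} :
    u ∈ cells μ ↔ 1 ≤ u.1 ∧ u.1 ≤ μ.length ∧ 1 ≤ u.2 ∧ u.2 ≤ μ.getD (u.1 - 1) 0 := by
  unfold cells
  simp only [Finset.mem_filter, Finset.mem_product, Finset.mem_Icc]
  constructor
  · rintro ⟨⟨⟨h1, h2⟩, ⟨h3, _⟩⟩, h5⟩
    exact ⟨h1, h2, h3, h5⟩
  · rintro ⟨h1, h2, h3, h5⟩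
    refine ⟨⟨⟨h1, h2⟩, ⟨h3, ?_⟩⟩, h5⟩
    have hlt : u.1 - 1 < μ.length := by omega
    have : μ.getD (u.1 - 1) 0 = μ.get ⟨u.1 - 1, hlt⟩ := List.getD_eq_get μ 0 ⟨u.1 - 1, hlt⟩
    exact le_trans h5 (this ▸ le_foldr_max (List.get_mem μ ⟨_, hlt⟩))

lemma dc_mem_iff_lt_card {n : ℕ} {s : Finset ℕ} (hs : s ⊆ Finset.range n)
    (dc : ∀ i ∈ s, ∀ j ≤ i, j ∈ s) (i : ℕ) : i ∈ s ↔ i < s.card := by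
  constructor
  · intro hi
    have hsub : Finset.range (i + 1) ⊆ s := by
      intro j hj
      exact dc i hi j (by simpa using Nat.lt_succ_iff.mp (Finset.mem_range.mp hj))
    have := Finset.card_le_card hsub
    simpa using this
  · intro hlt
    by_contra hi
    have hsub : s ⊆ Finset.range i := by
      intro x hx
      by_contra hxi
      exact hi (dc x hx i (by simpa using Nat.not_lt.mp (fun h => hxi (Finset.mem_range.mpr h))))
    have := Finset.card_le_card hsub
    simp at this
    omega

lemma lt_conj_iff {μ : List ℕ} (hμ : IsPartitionList μ) {j : ℕ} (i : ℕ) :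
    i < conj μ j ↔ i < μ.length ∧ j ≤ μ.getD i 0 := by
  have dc : ∀ a ∈ (Finset.range μ.length).filter (fun i => j ≤ μ.getD i 0),
      ∀ b ≤ a, b ∈ (Finset.range μ.length).filter (fun i => j ≤ μ.getD i 0) := by
    intro a ha b hb
    simp only [Finset.mem_filter, Finset.mem_range] at ha ⊢
    obtain ⟨ha1, ha2⟩ := ha
    have hblt : b < μ.length := lt_of_le_of_lt hb ha1
    refine ⟨hblt, le_trans ha2 ?_⟩
    have h1 : μ.getD a 0 = μ.get ⟨a, ha1⟩ := List.getD_eq_get μ 0 ⟨a, ha1⟩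
    have h2 : μ.getD b 0 = μ.get ⟨b, hblt⟩ := List.getD_eq_get μ 0 ⟨b, hblt⟩
    rw [h1, h2]
    exact hμ.1.rel_get_of_le (by simpa using hb)
  have := dc_mem_iff_lt_card (Finset.filter_subset _ _) dc i
  unfold conj
  rw [← this]
  simp

lemma mem_cells_iff_conj {μ : List ℕ} (hμ : IsPartitionList μ) {u : ℕ × ℕ} :
    u ∈ cells μ ↔ 1 ≤ u.1 ∧ 1 ≤ u.2 ∧ u.1 ≤ conj μ u.2 := by
  rw [mem_cells]
  constructor
  · rintro ⟨h1, h2, h3, h4⟩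
    refine ⟨h1, h3, ?_⟩
    have : u.1 - 1 < conj μ u.2 := (lt_conj_iff hμ (u.1 - 1)).mpr ⟨by omega, h4⟩
    omega
  · rintro ⟨h1, h3, h4⟩
    have : u.1 - 1 < conj μ u.2 := by omega
    rw [lt_conj_iff hμ] at this
    exact ⟨h1, by omega, h3, this.2⟩
section Ribbon

variable {s : Finset (ℕ × ℕ)} {m : ℕ}
  (hpos : ∀ x ∈ s, 1 ≤ x.1 ∧ 1 ≤ x.2)
  (hconn : ConnSet s)
  (hcard : s.card = m)
  (himg : s.image content = Finset.Icc (1 : ℤ) (m : ℤ))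

include hcard himg in
lemma content_injOn : Set.InjOn content s := by
  apply Finset.injOn_of_card_image_eq
  rw [himg, hcard, Int.card_Icc]
  omega

include himg in
lemma content_mem_Icc {u : ℕ × ℕ} (hu : u ∈ s) : 1 ≤ content u ∧ content u ≤ (m : ℤ) := by
  have : content u ∈ s.image content := Finset.mem_image_of_mem _ hu
  rw [himg, Finset.mem_Icc] at this
  exact this

include himg in
lemma exists_cell_content {c : ℤ} (h1 : 1 ≤ c) (h2 : c ≤ (m : ℤ)) :
    ∃ u ∈ s, content u = c := by
  have : c ∈ s.image content := by rw [himg, Finset.mem_Icc]; exact ⟨h1, h2⟩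
  simpa using Finset.mem_image.mp this

lemma adjCell_content {a b : ℕ × ℕ} (ha : 1 ≤ a.1 ∧ 1 ≤ a.2) (hb : 1 ≤ b.1 ∧ 1 ≤ b.2)
    (hadj : AdjCell a b) : content b = content a + 1 ∨ content a = content b + 1 := by
  unfold AdjCell at hadj
  unfold content
  omega

include hpos hconn hcard himg in
lemma step_adjacent {u w : ℕ × ℕ} (hu : u ∈ s) (hw : w ∈ s)
    (hc : content w = content u + 1) : AdjCell u w := by
  classical
  have key : ∀ x, Relation.ReflTransGen (fun a b => a ∈ s ∧ b ∈ s ∧ AdjCell a b) u x →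
      x ∈ s → content x ≤ content u ∨
      ∃ a b, a ∈ s ∧ b ∈ s ∧ AdjCell a b ∧ content a = content u ∧
        content b = content u + 1 := by
    intro x hx
    induction hx with
    | refl => intro _; left; rfl
    | @tail y x hpath hstep ih =>
        intro _
        obtain ⟨hy, hx, hadj⟩ := hstep
        rcases ih hy with hle | hex
        · rcases adjCell_content (hpos y hy) (hpos x hx) hadj with h | h
          · by_cases hcx : content x ≤ content u
            · left; exact hcx
            · right
              refine ⟨y, x, hy, hx, hadj, ?_, ?_⟩ <;> omega
          · left; omega
        · right; exact hex
  rcases key w (hconn u hu w hw) hw with hle | ⟨a, b, ha, hb, hadj, hca, hcb⟩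
  · omega
  · have hinj := content_injOn hcard himg
    have hau : a = u := hinj ha hu (by rw [hca])
    have hbw : b = w := hinj hb hw (by rw [hcb, hc])
    rw [← hau, ← hbw]
    exact hadj

include hpos hconn hcard himg in
lemma step_cases {u w : ℕ × ℕ} (hu : u ∈ s) (hw : w ∈ s)
    (hc : content w = content u + 1) :
    (w.1 = u.1 + 1 ∧ w.2 = u.2) ∨ (w.1 = u.1 ∧ u.2 = w.2 + 1) := by
  have hadj := step_adjacent hpos hconn hcard himg hu hw hc
  unfold AdjCell at hadj
  unfold content at hc
  have h1 := (hpos u hu).1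
  have h2 := (hpos u hu).2
  have h3 := (hpos w hw).1
  have h4 := (hpos w hw).2
  rcases hadj with ⟨e1, e2 | e2⟩ | ⟨e1, e2 | e2⟩ <;> [right; right; left; left] <;>
    constructor <;> omega

include hpos hcard himg in
lemma vert_iff {u w : ℕ × ℕ} (hu : u ∈ s) (hw : w ∈ s)
    (hc : content w = content u + 1) :
    ((w.1 = u.1 + 1 ∧ w.2 = u.2) ↔ (w.1 - 1, w.2) ∈ s) := by
  constructor
  · rintro ⟨h1, h2⟩
    have : (w.1 - 1, w.2) = u := by
      have := (hpos u hu).1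
      ext <;> simp <;> omega
    rw [this]; exact hu
  · intro hmem
    have hw1 := (hpos w hw).1
    have hcb : content (w.1 - 1, w.2) = content u := by
      unfold content at *
      simp only
      omega
    have : (w.1 - 1, w.2) = u := content_injOn hcard himg hmem hu hcb
    have e2 : w.2 = u.2 := by rw [← this]
    have e1 : w.1 - 1 = u.1 := by rw [← this]
    unfold content at hc
    constructor <;> omega

include hpos hconn hcard himg in
lemma coord_mono : ∀ d : ℕ, ∀ u ∈ s, ∀ v ∈ s, content v = content u + d →
    u.1 ≤ v.1 ∧ v.2 ≤ u.2 := by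
  intro d
  induction d with
  | zero =>
      intro u hu v hv hc
      have : v = u := content_injOn hcard himg hv hu (by omega)
      simp [this]
  | succ d ih =>
      intro u hu v hv hc
      have hcu := content_mem_Icc himg hu
      have hcv := content_mem_Icc himg hv
      obtain ⟨w, hws, hwc⟩ := exists_cell_content himg
        (c := content u + d) (by omega) (by omega)
      have h1 := ih u hu w hws hwc
      have h2 := step_cases hpos hconn hcard himg hws hv (by omega)
      rcases h2 with ⟨e1, e2⟩ | ⟨e1, e2⟩ <;> constructor <;> omega

include hpos hconn hcard himg in
lemma row_chain (T : ℕ × ℕ → ℕ)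
    (H : ∀ a ∈ s, ∀ b ∈ s, content b = content a + 1 → b.1 = a.1 → T b ≤ T a) :
    ∀ d : ℕ, ∀ u ∈ s, ∀ v ∈ s, content v = content u + d → v.1 = u.1 → T v ≤ T u := by
  intro d
  induction d with
  | zero =>
      intro u hu v hv hc _
      have : v = u := content_injOn hcard himg hv hu (by omega)
      simp [this]
  | succ d ih =>
      intro u hu v hv hc hr
      have hcu := content_mem_Icc himg hu
      have hcv := content_mem_Icc himg hv
      obtain ⟨w, hws, hwc⟩ := exists_cell_content himg
        (c := content u + d) (by omega) (by omega)
      have m1 := coord_mono hpos hconn hcard himg d u hu w hws hwc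
      have m2 := coord_mono hpos hconn hcard himg 1 w hws v hv (by omega)
      have hwr : w.1 = u.1 := by omega
      exact le_trans (H w hws v hv (by omega) (by omega)) (ih u hu w hws hwc hwr)

include hpos hconn hcard himg in
lemma col_chain (T : ℕ × ℕ → ℕ)
    (H : ∀ a ∈ s, ∀ b ∈ s, content b = content a + 1 → b.2 = a.2 → T a < T b) :
    ∀ d : ℕ, ∀ u ∈ s, ∀ v ∈ s, content v = content u + (d + 1) → v.2 = u.2 →
      T u < T v := by
  intro d
  induction d with
  | zero =>
      intro u hu v hv hc hcol
      exact H u hu v hv (by omega) hcol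
  | succ d ih =>
      intro u hu v hv hc hcol
      have hcu := content_mem_Icc himg hu
      have hcv := content_mem_Icc himg hv
      obtain ⟨w, hws, hwc⟩ := exists_cell_content himg
        (c := content u + (d + 1)) (by omega) (by omega)
      have m1 := coord_mono hpos hconn hcard himg (d+1) u hu w hws (by omega)
      have m2 := coord_mono hpos hconn hcard himg 1 w hws v hv (by omega)
      have hwcol : w.2 = v.2 := by omega
      exact lt_trans (ih u hu w hws hwc (by omega)) (H w hws v hv (by omega) (by omega))

end Ribbon
/-- The cell map from tuple domain to the diagram of `μ`. -/
def phi {k : ℕ} (ν : Fin k → List ℕ × List ℕ) : TDom ν → ℕ × ℕ :=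
  fun a => ((content a.2.1).toNat, a.1.1 + 1)

lemma skew_pos {p : List ℕ × List ℕ} {x : ℕ × ℕ} (hx : x ∈ skewCells p) :
    1 ≤ x.1 ∧ 1 ≤ x.2 := by
  have := Finset.mem_sdiff.mp hx
  have := mem_cells.mp this.1
  exact ⟨this.1, this.2.2.1⟩

lemma mem_ribbonDes {p : List ℕ × List ℕ} {c : ℤ} :
    c ∈ ribbonDes p ↔ ∃ w ∈ skewCells p, (w.1 - 1, w.2) ∈ skewCells p ∧ content w = c := by
  unfold ribbonDes
  simp only [Finset.mem_image, Finset.mem_filter]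
  constructor
  · rintro ⟨w, ⟨h1, h2⟩, h3⟩; exact ⟨w, h1, h2, h3⟩
  · rintro ⟨w, h1, h2, h3⟩; exact ⟨w, ⟨h1, h2⟩, h3⟩

lemma col_le_k {μ : List ℕ} (hμ : IsPartitionList μ) {x : ℕ × ℕ} (hx : x ∈ cells μ) :
    x.2 ≤ μ.getD 0 0 := by
  rw [mem_cells_iff_conj hμ] at hx
  obtain ⟨h1, h2, h3⟩ := hx
  have : 0 < conj μ x.2 := by omega
  rw [lt_conj_iff hμ] at this
  exact this.2

lemma below_mem {μ : List ℕ} (hμ : IsPartitionList μ) {x : ℕ × ℕ} (hx : x ∈ cells μ)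
    (h2 : 2 ≤ x.1) : (x.1 - 1, x.2) ∈ cells μ := by
  rw [mem_cells_iff_conj hμ] at hx ⊢
  simp only
  omega

section Main

variable {μ : List ℕ} {k : ℕ} {ν : Fin k → List ℕ × List ℕ}

lemma phi_mem (hμ : IsPartitionList μ)
    (hrib : ∀ j : Fin k, IsRibbonWithContents (ν j) (conj μ (j.val + 1)))
    (a : TDom ν) : phi ν a ∈ cells μ := by
  obtain ⟨j, u, hu⟩ := a
  have himg := (hrib j).2.2.2.2
  have hc := content_mem_Icc himg hu
  rw [mem_cells_iff_conj hμ]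
  unfold phi
  simp only
  omega

lemma phi_inj (hμ : IsPartitionList μ)
    (hrib : ∀ j : Fin k, IsRibbonWithContents (ν j) (conj μ (j.val + 1))) :
    Function.Injective (phi ν) := by
  rintro ⟨j, u, hu⟩ ⟨j', v, hv⟩ h
  unfold phi at h
  simp only [Prod.mk.injEq] at h
  have hj : j = j' := by
    apply Fin.ext; omega
  subst hj
  have himg := (hrib j).2.2.2.2
  have hcard := (hrib j).2.2.2.1
  have hcu := content_mem_Icc himg hu
  have hcv := content_mem_Icc himg hv
  have hceq : content u = content v := by omega
  have : u = v := content_injOn hcard himg hu hv hceq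
  subst this
  rfl

lemma phi_surj (hμ : IsPartitionList μ) (hk : k = μ.getD 0 0)
    (hrib : ∀ j : Fin k, IsRibbonWithContents (ν j) (conj μ (j.val + 1)))
    {x : ℕ × ℕ} (hx : x ∈ cells μ) : ∃ a : TDom ν, phi ν a = x := by
  have hcol : x.2 ≤ k := hk ▸ col_le_k hμ hx
  have hx' := (mem_cells_iff_conj hμ).mp hx
  have hj : x.2 - 1 < k := by omega
  set j : Fin k := ⟨x.2 - 1, hj⟩
  have hjc : j.val + 1 = x.2 := by simp only [j]; omega
  have himg := (hrib j).2.2.2.2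
  obtain ⟨u, hu, hcu⟩ := exists_cell_content himg (c := (x.1 : ℤ))
    (by exact_mod_cast hx'.1) (by rw [hjc]; exact_mod_cast hx'.2.2)
  refine ⟨⟨j, u, hu⟩, ?_⟩
  unfold phi
  simp only [hcu, hjc, Int.toNat_natCast]

lemma exists_equiv (hμ : IsPartitionList μ) (hk : k = μ.getD 0 0)
    (hrib : ∀ j : Fin k, IsRibbonWithContents (ν j) (conj μ (j.val + 1))) :
    ∃ e : TDom ν ≃ {u // u ∈ cells μ}, ∀ a, (e a).1 = phi ν a := by
  have hbij : Function.Bijective (fun a : TDom ν => (⟨phi ν a, phi_mem hμ hrib a⟩ :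
      {u // u ∈ cells μ})) := by
    constructor
    · intro a b h
      exact phi_inj hμ hrib (congrArg Subtype.val h)
    · rintro ⟨x, hx⟩
      obtain ⟨a, ha⟩ := phi_surj hμ hk hrib hx
      exact ⟨a, Subtype.ext ha⟩
  exact ⟨Equiv.ofBijective _ hbij, fun a => rfl⟩

end Main
section Main2

variable {μ : List ℕ} {k : ℕ} {ν : Fin k → List ℕ × List ℕ} {D : Finset (ℕ × ℕ)}

lemma mem_desCells {σ : ℕ × ℕ → ℕ} {x : ℕ × ℕ} :
    x ∈ desCells μ natInd σ ↔
      x ∈ cells μ ∧ (x.1 - 1, x.2) ∈ cells μ ∧ σ (x.1 - 1, x.2) < σ x := by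
  unfold desCells natInd
  simp [Finset.mem_filter, and_assoc]

lemma sigma_phi (hμ : IsPartitionList μ)
    (hrib : ∀ j : Fin k, IsRibbonWithContents (ν j) (conj μ (j.val + 1)))
    {N : ℕ} (e : TDom ν ≃ {u // u ∈ cells μ}) (he : ∀ a, (e a).1 = phi ν a)
    (g : TDom ν → Fin N) (a : TDom ν) :
    natFill μ (fun u => g (e.symm u)) (phi ν a) = (g a).val + 1 := by
  unfold natFill extendF
  rw [dif_pos (phi_mem hμ hrib a)]
  have : (⟨phi ν a, phi_mem hμ hrib a⟩ : {u // u ∈ cells μ}) = e a :=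
    Subtype.ext (he a).symm
  rw [this]
  simp

lemma D_iff_ribbonDes
    (hdes : ∀ j : Fin k, ribbonDes (ν j) =
      (D.filter fun u => u.2 = j.val + 1).image (fun u => (u.1 : ℤ)))
    (j : Fin k) (c : ℕ) : (c, j.val + 1) ∈ D ↔ (c : ℤ) ∈ ribbonDes (ν j) := by
  rw [hdes j]
  simp only [Finset.mem_image, Finset.mem_filter]
  constructor
  · intro h
    exact ⟨(c, j.val + 1), ⟨h, rfl⟩, rfl⟩
  · rintro ⟨u, ⟨hu, hu2⟩, hu1⟩
    have : u = (c, j.val + 1) := by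
      have : u.1 = c := by exact_mod_cast hu1
      ext <;> simp [this, hu2]
    rwa [this] at hu

lemma cell_in_mu (hμ : IsPartitionList μ) (j : Fin k) {c : ℕ} (h1 : 1 ≤ c)
    (h2 : c ≤ conj μ (j.val + 1)) : (c, j.val + 1) ∈ cells μ := by
  rw [mem_cells_iff_conj hμ]
  exact ⟨h1, by omega, h2⟩

lemma step_vert_iff_des (hμ : IsPartitionList μ)
    (hrib : ∀ j : Fin k, IsRibbonWithContents (ν j) (conj μ (j.val + 1)))
    (hdes : ∀ j : Fin k, ribbonDes (ν j) =
      (D.filter fun u => u.2 = j.val + 1).image (fun u => (u.1 : ℤ)))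
    (j : Fin k) {a b : ℕ × ℕ} (ha : a ∈ skewCells (ν j)) (hb : b ∈ skewCells (ν j))
    (hc : content b = content a + 1) :
    (b.1 = a.1 + 1 ∧ b.2 = a.2) ↔ ((content b).toNat, j.val + 1) ∈ D := by
  obtain ⟨_, hconn, _, hcard, himg⟩ := hrib j
  have hpos : ∀ x ∈ skewCells (ν j), 1 ≤ x.1 ∧ 1 ≤ x.2 := fun x hx => skew_pos hx
  have hca := content_mem_Icc himg ha
  rw [vert_iff hpos hcard himg ha hb hc]
  rw [D_iff_ribbonDes hdes j]
  have hcb : ((content b).toNat : ℤ) = content b := by omega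
  rw [hcb, mem_ribbonDes]
  constructor
  · intro h
    exact ⟨b, hb, h, rfl⟩
  · rintro ⟨w, hw, hw', hwc⟩
    have : w = b := content_injOn hcard himg hw hb hwc
    rwa [this] at hw'

end Main2
section Main3

variable {μ : List ℕ} {k : ℕ} {ν : Fin k → List ℕ × List ℕ} {D : Finset (ℕ × ℕ)}

lemma des_iff_ssyt (hμ : IsPartitionList μ)
    (hD : ∀ u ∈ D, u ∈ cells μ ∧ 2 ≤ u.1) (hk : k = μ.getD 0 0)
    (hrib : ∀ j : Fin k, IsRibbonWithContents (ν j) (conj μ (j.val + 1)))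
    (hdes : ∀ j : Fin k, ribbonDes (ν j) =
      (D.filter fun u => u.2 = j.val + 1).image (fun u => (u.1 : ℤ)))
    {N : ℕ} (e : TDom ν ≃ {u // u ∈ cells μ}) (he : ∀ a, (e a).1 = phi ν a)
    (g : TDom ν → Fin N) :
    desCells μ natInd (natFill μ (fun u => g (e.symm u))) = D ↔
      IsSSYTtuple ν (fun a => (g a).val + 1) := by
  set σ : ℕ × ℕ → ℕ := natFill μ (fun u => g (e.symm u)) with hσdef
  have hσ : ∀ a : TDom ν, σ (phi ν a) = (g a).val + 1 := sigma_phi hμ hrib e he g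
  constructor
  · -- descents = D  →  SSYT
    intro hdesc
    intro j u v
    obtain ⟨_, hconn, _, hcard, himg⟩ := hrib j
    have hpos : ∀ x ∈ skewCells (ν j), 1 ≤ x.1 ∧ 1 ≤ x.2 := fun x hx => skew_pos hx
    set T : ℕ × ℕ → ℕ := fun x => σ ((content x).toNat, j.val + 1) with hT
    have hTval : ∀ w : {u // u ∈ skewCells (ν j)}, T w.1 = (g ⟨j, w⟩).val + 1 := by
      intro w
      have := hσ ⟨j, w⟩
      simpa [phi, hT] using this
    have Hrow : ∀ a ∈ skewCells (ν j), ∀ b ∈ skewCells (ν j),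
        content b = content a + 1 → b.1 = a.1 → T b ≤ T a := by
      intro a ha b hb hc hr
      have hca := content_mem_Icc himg ha
      have hcb := content_mem_Icc himg hb
      have hnotvert : ¬(b.1 = a.1 + 1 ∧ b.2 = a.2) := by omega
      have hnotD : ((content b).toNat, j.val + 1) ∉ D :=
        fun h => hnotvert ((step_vert_iff_des hμ hrib hdes j ha hb hc).mpr h)
      rw [← hdesc, mem_desCells] at hnotD
      push_neg at hnotD
      have hma : ((content a).toNat, j.val + 1) ∈ cells μ :=
        cell_in_mu hμ j (by omega) (by omega)
      have hmb : ((content b).toNat, j.val + 1) ∈ cells μ :=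
        cell_in_mu hμ j (by omega) (by omega)
      have hcomp : (content b).toNat - 1 = (content a).toNat := by omega
      have hbelow : ((((content b).toNat, j.val + 1) : ℕ × ℕ).1 - 1,
          (((content b).toNat, j.val + 1) : ℕ × ℕ).2) = ((content a).toNat, j.val + 1) := by
        show ((content b).toNat - 1, j.val + 1) = ((content a).toNat, j.val + 1)
        rw [hcomp]
      have hres := hnotD hmb (by rw [hbelow]; exact hma)
      rw [hbelow] at hres
      show σ ((content b).toNat, j.val + 1) ≤ σ ((content a).toNat, j.val + 1)
      exact hres
    have Hcol : ∀ a ∈ skewCells (ν j), ∀ b ∈ skewCells (ν j),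
        content b = content a + 1 → b.2 = a.2 → T a < T b := by
      intro a ha b hb hc hcol
      have hca := content_mem_Icc himg ha
      have hcb := content_mem_Icc himg hb
      have hvert : b.1 = a.1 + 1 ∧ b.2 = a.2 := by
        rcases step_cases hpos hconn hcard himg ha hb hc with h | h
        · exact h
        · exfalso
          unfold content at hc
          omega
      have hxD := (step_vert_iff_des hμ hrib hdes j ha hb hc).mp hvert
      rw [← hdesc, mem_desCells] at hxD
      obtain ⟨_, _, hlt⟩ := hxD
      have hcomp : (content b).toNat - 1 = (content a).toNat := by omega
      have hbelow : ((((content b).toNat, j.val + 1) : ℕ × ℕ).1 - 1,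
          (((content b).toNat, j.val + 1) : ℕ × ℕ).2) = ((content a).toNat, j.val + 1) := by
        show ((content b).toNat - 1, j.val + 1) = ((content a).toNat, j.val + 1)
        rw [hcomp]
      rw [hbelow] at hlt
      show σ ((content a).toNat, j.val + 1) < σ ((content b).toNat, j.val + 1)
      exact hlt
    refine ⟨?_, ?_⟩
    · rintro ⟨hroweq, hcolle⟩
      have hcu := content_mem_Icc himg u.2
      have hcv := content_mem_Icc himg v.2
      have hge : content v.1 ≤ content u.1 := by
        unfold content
        omega
      set d := (content u.1 - content v.1).toNat with hd
      have hceq : content u.1 = content v.1 + d := by omega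
      have hch := row_chain hpos hconn hcard himg T Hrow d v.1 v.2 u.1 u.2 hceq hroweq
      have e1 := hTval u
      have e2 := hTval v
      show (g ⟨j, u⟩).val + 1 ≤ (g ⟨j, v⟩).val + 1
      omega
    · rintro ⟨hcoleq, hrowlt⟩
      have hcu := content_mem_Icc himg u.2
      have hcv := content_mem_Icc himg v.2
      have hlt : content u.1 < content v.1 := by
        unfold content
        omega
      set d := (content v.1 - content u.1).toNat - 1 with hd
      have hceq : content v.1 = content u.1 + (d + 1) := by omega
      have hch := col_chain hpos hconn hcard himg T Hcol d u.1 u.2 v.1 v.2 hceq hcoleq.symm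
      have e1 := hTval u
      have e2 := hTval v
      show (g ⟨j, u⟩).val + 1 < (g ⟨j, v⟩).val + 1
      omega
  · -- SSYT → descents = D
    intro hssyt
    apply Finset.ext
    intro x
    constructor
    · intro hx
      rw [mem_desCells] at hx
      obtain ⟨hx1, hx2, hx3⟩ := hx
      have hxc := (mem_cells_iff_conj hμ).mp hx1
      have hxb := (mem_cells_iff_conj hμ).mp hx2
      simp only at hxb
      have hx1ge2 : 2 ≤ x.1 := by omega
      have hcol : x.2 ≤ k := hk ▸ col_le_k hμ hx1
      have hjlt : x.2 - 1 < k := by omega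
      set j : Fin k := ⟨x.2 - 1, hjlt⟩ with hjdef
      have hj1 : j.val + 1 = x.2 := by
        simp only [hjdef]
        omega
      obtain ⟨_, hconn, _, hcard, himg⟩ := hrib j
      have hpos : ∀ y ∈ skewCells (ν j), 1 ≤ y.1 ∧ 1 ≤ y.2 := fun y hy => skew_pos hy
      have hmle : x.1 ≤ conj μ (j.val + 1) := by rw [hj1]; exact hxc.2.2
      obtain ⟨w, hw, hwc⟩ := exists_cell_content himg (c := (x.1 : ℤ))
        (by exact_mod_cast hx1ge2.trans' (by omega)) (by exact_mod_cast hmle)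
      obtain ⟨a, ha, hac⟩ := exists_cell_content himg (c := (x.1 : ℤ) - 1)
        (by omega) (by omega)
      have hstep : content w = content a + 1 := by omega
      rcases step_cases hpos hconn hcard himg ha hw hstep with hvert | hhor
      · have hmem := (step_vert_iff_des hμ hrib hdes j ha hw hstep).mp hvert
        have hxeq : (((content w).toNat : ℕ), j.val + 1) = x :=
          Prod.ext (by show (content w).toNat = x.1; omega) hj1
        rwa [hxeq] at hmem
      · exfalso
        have h1 := (hssyt j ⟨w, hw⟩ ⟨a, ha⟩).1 ⟨hhor.1, by show w.2 ≤ a.2; omega⟩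
        have h1' : (g ⟨j, w, hw⟩).val + 1 ≤ (g ⟨j, a, ha⟩).val + 1 := h1
        have ew : phi ν ⟨j, w, hw⟩ = x :=
          Prod.ext (by show (content w).toNat = x.1; omega) hj1
        have ea : phi ν ⟨j, a, ha⟩ = (x.1 - 1, x.2) :=
          Prod.ext (by show (content a).toNat = x.1 - 1; omega) hj1
        have s1 := hσ ⟨j, w, hw⟩
        have s2 := hσ ⟨j, a, ha⟩
        rw [ew] at s1
        rw [ea] at s2
        omega
    · intro hxD
      obtain ⟨hx1, hx2⟩ := hD x hxD
      have hxc := (mem_cells_iff_conj hμ).mp hx1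
      have hcol : x.2 ≤ k := hk ▸ col_le_k hμ hx1
      have hjlt : x.2 - 1 < k := by omega
      set j : Fin k := ⟨x.2 - 1, hjlt⟩ with hjdef
      have hj1 : j.val + 1 = x.2 := by
        simp only [hjdef]
        omega
      have hrd : ((x.1 : ℤ)) ∈ ribbonDes (ν j) := by
        have hxeq : ((x.1, j.val + 1) : ℕ × ℕ) = x := Prod.ext rfl hj1
        exact (D_iff_ribbonDes hdes j x.1).mp (hxeq ▸ hxD)
      rw [mem_ribbonDes] at hrd
      obtain ⟨w, hw, hw', hwc⟩ := hrd
      have hwpos := skew_pos hw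
      have hwpos' := skew_pos hw'
      have h1 := (hssyt j ⟨(w.1 - 1, w.2), hw'⟩ ⟨w, hw⟩).2
        ⟨rfl, by show w.1 - 1 < w.1; omega⟩
      have h1' : (g ⟨j, (w.1 - 1, w.2), hw'⟩).val + 1 < (g ⟨j, w, hw⟩).val + 1 := h1
      have ew : phi ν ⟨j, w, hw⟩ = x :=
        Prod.ext (by show (content w).toNat = x.1; omega) hj1
      have hacont : content (w.1 - 1, w.2) = (x.1 : ℤ) - 1 := by
        unfold content at hwc ⊢
        simp only
        omega
      have ea : phi ν ⟨j, (w.1 - 1, w.2), hw'⟩ = (x.1 - 1, x.2) :=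
        Prod.ext (by show (content (w.1 - 1, w.2)).toNat = x.1 - 1; rw [hacont]; omega) hj1
      have s1 := hσ ⟨j, w, hw⟩
      have s2 := hσ ⟨j, (w.1 - 1, w.2), hw'⟩
      rw [ew] at s1
      rw [ea] at s2
      rw [mem_desCells]
      refine ⟨hx1, below_mem hμ hx1 hx2, ?_⟩
      omega

end Main3
section Main4

variable {μ : List ℕ} {k : ℕ} {ν : Fin k → List ℕ × List ℕ}

lemma inv_card_eq (hμ : IsPartitionList μ)
    (hrib : ∀ j : Fin k, IsRibbonWithContents (ν j) (conj μ (j.val + 1)))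
    {N : ℕ} (e : TDom ν ≃ {u // u ∈ cells μ}) (he : ∀ a, (e a).1 = phi ν a)
    (g : TDom ν → Fin N) :
    (invPairs μ natInd (natFill μ (fun u => g (e.symm u)))).card =
      lltInv ν (fun a => (g a).val + 1) := by
  classical
  set σ : ℕ × ℕ → ℕ := natFill μ (fun u => g (e.symm u)) with hσdef
  have hσ : ∀ a : TDom ν, σ (phi ν a) = (g a).val + 1 := sigma_phi hμ hrib e he g
  have hphisymm : ∀ x : {u // u ∈ cells μ}, phi ν (e.symm x) = x.1 := by
    intro x
    rw [← he, Equiv.apply_symm_apply]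
  have hcont : ∀ a : TDom ν, 1 ≤ content a.2.1 ∧
      content a.2.1 ≤ (conj μ (a.1.val + 1) : ℤ) :=
    fun a => content_mem_Icc (hrib a.1).2.2.2.2 a.2.2
  have hinv1 : ∀ (a : TDom ν) (h : phi ν a ∈ cells μ), e.symm ⟨phi ν a, h⟩ = a := by
    intro a h
    rw [show (⟨phi ν a, h⟩ : {u // u ∈ cells μ}) = e a from Subtype.ext (he a).symm,
      Equiv.symm_apply_apply]
  have hi_main : ∀ p : TDom ν × TDom ν,
      ((p.1.1 < p.2.1 ∧ content p.1.2.1 = content p.2.2.1) ∨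
        (p.2.1 < p.1.1 ∧ content p.1.2.1 = content p.2.2.1 + 1)) →
      (g p.2).val + 1 < (g p.1).val + 1 →
      (phi ν p.1, phi ν p.2) ∈ (cells μ ×ˢ cells μ).filter
        (fun q => AttackOrd q.1 q.2 ∧ natInd (σ q.1) (σ q.2)) := by
    intro p hcond hlt
    have hca := hcont p.1
    have hcb := hcont p.2
    rw [Finset.mem_filter]
    refine ⟨Finset.mem_product.mpr ⟨phi_mem hμ hrib p.1, phi_mem hμ hrib p.2⟩, ?_, ?_⟩
    · unfold AttackOrd phi
      simp only
      rcases hcond with ⟨hj, hc⟩ | ⟨hj, hc⟩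
      · left
        have hjv : p.1.1.val < p.2.1.val := hj
        exact ⟨by omega, by omega⟩
      · right
        have hjv : p.2.1.val < p.1.1.val := hj
        exact ⟨by omega, by omega⟩
    · unfold natInd
      rw [hσ p.1, hσ p.2]
      omega
  have hj_main : ∀ (q : (ℕ × ℕ) × (ℕ × ℕ)) (h1 : q.1 ∈ cells μ) (h2 : q.2 ∈ cells μ),
      AttackOrd q.1 q.2 → natInd (σ q.1) (σ q.2) →
      (((e.symm ⟨q.1, h1⟩ : TDom ν), (e.symm ⟨q.2, h2⟩ : TDom ν)) ∈
        Finset.univ.filter fun p : TDom ν × TDom ν =>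
          ((p.1.1 < p.2.1 ∧ content p.1.2.1 = content p.2.2.1) ∨
            (p.2.1 < p.1.1 ∧ content p.1.2.1 = content p.2.2.1 + 1)) ∧
          (fun a => (g a).val + 1) p.2 < (fun a => (g a).val + 1) p.1) := by
    intro q h1 h2 hatt hind
    rw [Finset.mem_filter]
    refine ⟨Finset.mem_univ _, ?_, ?_⟩
    · set a := e.symm ⟨q.1, h1⟩ with ha
      set b := e.symm ⟨q.2, h2⟩ with hb
      have hca := hcont a
      have hcb := hcont b
      have hpa : phi ν a = q.1 := hphisymm _
      have hpb : phi ν b = q.2 := hphisymm _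
      unfold phi at hpa hpb
      have hpa1 : (content a.2.1).toNat = q.1.1 := congrArg Prod.fst hpa
      have hpa2 : a.1.val + 1 = q.1.2 := congrArg Prod.snd hpa
      have hpb1 : (content b.2.1).toNat = q.2.1 := congrArg Prod.fst hpb
      have hpb2 : b.1.val + 1 = q.2.2 := congrArg Prod.snd hpb
      unfold AttackOrd at hatt
      show (a.1 < b.1 ∧ content a.2.1 = content b.2.1) ∨
        (b.1 < a.1 ∧ content a.2.1 = content b.2.1 + 1)
      rcases hatt with ⟨hc, hj⟩ | ⟨hc, hj⟩
      · left
        exact ⟨show a.1.val < b.1.val by omega, by omega⟩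
      · right
        exact ⟨show b.1.val < a.1.val by omega, by omega⟩
    · unfold natInd at hind
      have sa := hσ (e.symm ⟨q.1, h1⟩)
      have sb := hσ (e.symm ⟨q.2, h2⟩)
      rw [hphisymm] at sa sb
      simp only at sa sb ⊢
      omega
  unfold lltInv invPairs
  symm
  refine Finset.card_bij'
    (i := fun (p : TDom ν × TDom ν) _ => ((phi ν p.1, phi ν p.2) : (ℕ × ℕ) × (ℕ × ℕ)))
    (j := fun (q : (ℕ × ℕ) × (ℕ × ℕ)) hq =>
        ((e.symm ⟨q.1, (Finset.mem_product.mp (Finset.mem_filter.mp hq).1).1⟩,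
          e.symm ⟨q.2, (Finset.mem_product.mp (Finset.mem_filter.mp hq).1).2⟩) :
          TDom ν × TDom ν)) ?_ ?_ ?_ ?_
  · intro p hp
    rw [Finset.mem_filter] at hp
    have hcond := hp.2.1
    have hlt := hp.2.2
    simp only at hcond hlt
    exact hi_main p hcond hlt
  · intro q hq
    have hq' := Finset.mem_filter.mp hq
    have hmm := Finset.mem_product.mp hq'.1
    exact hj_main q hmm.1 hmm.2 hq'.2.1 hq'.2.2
  · intro p hp
    exact Prod.ext (hinv1 _ _) (hinv1 _ _)
  · intro q hq
    exact Prod.ext (hphisymm _) (hphisymm _)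

end Main4
/-- Let `μ` be a partition, `D ⊆ {(i,j) ∈ dg(μ) : i > 1}`, and
let `ν(μ,D) = (ν^(1),…,ν^(k))` with `k = μ_1` be the tuple of ribbons in which
`ν^(j)` has cell contents `{1,…,μ'_j}` and descent set `{i : (i,j) ∈ D}`.
Then for every `N ≥ 1`, `F_{μ,D}(x_1,…,x_N;q) = G_{ν(μ,D)}(x_1,…,x_N;q)`. -/
theorem Fmu_eq_llt (μ : List ℕ) (hμ : IsPartitionList μ)
    (D : Finset (ℕ × ℕ)) (hD : ∀ u ∈ D, u ∈ cells μ ∧ 2 ≤ u.1)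
    (k : ℕ) (hk : k = μ.getD 0 0)
    (ν : Fin k → List ℕ × List ℕ)
    (hrib : ∀ j : Fin k, IsRibbonWithContents (ν j) (conj μ (j.val + 1)))
    (hdes : ∀ j : Fin k, ribbonDes (ν j) =
      (D.filter fun u => u.2 = j.val + 1).image (fun u => (u.1 : ℤ)))
    (N : ℕ) (hN : 1 ≤ N) :
    Fmu μ D N = llt ν N := by
  classical
  obtain ⟨e, he⟩ := exists_equiv hμ hk hrib
  unfold Fmu llt
  refine Finset.sum_bij'
    (i := fun (f : {u // u ∈ cells μ} → Fin N) _ => (fun a => f (e a)))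
    (j := fun (g : TDom ν → Fin N) _ => (fun u => g (e.symm u))) ?_ ?_ ?_ ?_ ?_
  · intro f hf
    rw [Finset.mem_filter] at hf ⊢
    refine ⟨Finset.mem_univ _, ?_⟩
    refine (des_iff_ssyt hμ hD hk hrib hdes e he (fun a => f (e a))).mp ?_
    have h2 : (fun u => (fun a => f (e a)) (e.symm u)) = f := by
      funext u
      simp
    rw [h2]
    exact hf.2
  · intro g hg
    rw [Finset.mem_filter] at hg ⊢
    refine ⟨Finset.mem_univ _, ?_⟩
    exact (des_iff_ssyt hμ hD hk hrib hdes e he g).mpr hg.2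
  · intro f _
    funext u
    simp
  · intro g _
    funext a
    simp
  · intro f hf
    have hc := inv_card_eq hμ hrib e he (fun a => f (e a))
    have h2 : (fun u => (fun a => f (e a)) (e.symm u)) = f := by
      funext u
      simp
    rw [h2] at hc
    rw [hc, ← Equiv.prod_comp e (fun u => (X (f u) : MvPolynomial (Fin N) (Polynomial ℤ)))]

end HHL
end

section
/- Let μ be a partition and N ≥ 1, and use the total order <₁ on the super alphabet A. Then Σ_σ (−1)^{m(σ)} q^{p(σ)+inv(σ)} t^{maj(σ)} x^{|σ|}, summed over ALL super fillings σ : dg(μ) → A with |σ(u)| ≤ N for all u, equals the same sum restricted to non-attacking super fillings, i.e. those σ with |σ(u)| ≠ |σ(v)| for every pair of attacking cells u, v. -/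
open Finset MvPolynomial

namespace HHL

/-! ### Auxiliary machinery for the cancellation involution -/

section PsiAux

/-- Letter-level: when absolute values differ, `I` only depends on them. -/
lemma ind_abs_ne {x y : SLetter} (h : x.1 ≠ y.1) : IndOf lt1 x y ↔ y.1 < x.1 := by
  obtain ⟨a, b⟩ := x; obtain ⟨c, d⟩ := y
  simp only [IndOf, lt1, Prod.mk.injEq] at *
  constructor
  · rintro ((h1 | ⟨h1, _, _⟩) | ⟨⟨h1, h2⟩, _⟩) <;> omega
  · intro h1; exact Or.inl (Or.inl h1)

/-- Letter-level: when absolute values agree, `I(x,y)` holds iff `x` is barred. -/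
lemma ind_abs_eq {x y : SLetter} (h : x.1 = y.1) : IndOf lt1 x y ↔ x.2 = true := by
  obtain ⟨a, b⟩ := x; obtain ⟨c, d⟩ := y
  simp only at h; subst h
  cases b <;> cases d <;> simp [IndOf, lt1, Prod.mk.injEq]

/-- Totality-type property of `I`. -/
lemma ind_total {x y : SLetter} (z : SLetter) (h : IndOf lt1 x y) :
    IndOf lt1 x z ∨ IndOf lt1 z y := by
  obtain ⟨a, b⟩ := x; obtain ⟨c, d⟩ := y; obtain ⟨e, f⟩ := z
  simp only [IndOf, lt1, Prod.mk.injEq] at *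
  cases b <;> cases d <;> cases f <;> simp_all <;> omega

lemma mem_cells_bounds {μ : List ℕ} {u : ℕ × ℕ} (h : u ∈ cells μ) :
    1 ≤ u.1 ∧ 1 ≤ u.2 ∧ u.2 ≤ μ.foldr max 0 := by
  simp only [cells, Finset.mem_filter, Finset.mem_product, Finset.mem_Icc] at h
  exact ⟨h.1.1.1, h.1.2.1, h.1.2.2⟩

def Kof (μ : List ℕ) : ℕ := μ.foldr max 0 + 2

def keyC (μ : List ℕ) (u : ℕ × ℕ) : ℕ := Kof μ * u.1 + (Kof μ - u.2)

lemma attackOrd_ne {u v : ℕ × ℕ} (h : AttackOrd u v) : u ≠ v := by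
  rcases h with ⟨h1, h2⟩ | ⟨h1, h2⟩ <;> intro he <;> rw [he] at h1 h2 <;> omega

lemma attackOrd_or {u v w : ℕ × ℕ} (h1 : AttackOrd u v) (h2 : AttackOrd u w) (hne : v ≠ w) :
    AttackOrd v w ∨ AttackOrd w v := by
  have hne' : v.1 ≠ w.1 ∨ v.2 ≠ w.2 := by
    by_contra hc; push_neg at hc; exact hne (Prod.ext_iff.mpr hc)
  unfold AttackOrd at *
  omega

lemma key_lt {μ : List ℕ} {u v : ℕ × ℕ} (hu : u ∈ cells μ) (hv : v ∈ cells μ)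
    (h : AttackOrd u v) : keyC μ v < keyC μ u := by
  obtain ⟨hu1, hu2, hu3⟩ := mem_cells_bounds hu
  obtain ⟨hv1, hv2, hv3⟩ := mem_cells_bounds hv
  have hu3' : u.2 + 2 ≤ Kof μ := by unfold Kof; omega
  have hv3' : v.2 + 2 ≤ Kof μ := by unfold Kof; omega
  rcases h with ⟨h1, h2⟩ | ⟨h1, h2⟩
  · unfold keyC; rw [h1]; generalize Kof μ * v.1 = A; omega
  · have hm : Kof μ * u.1 = Kof μ * v.1 + Kof μ := by rw [h1]; ring
    unfold keyC; rw [hm]; generalize Kof μ * v.1 = A; omega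

/-- The candidate cells: cells attacking a later cell of equal value of `g`. -/
def candC (μ : List ℕ) (g : ℕ × ℕ → ℕ) : Finset (ℕ × ℕ) :=
  (cells μ).filter fun u => ∃ v ∈ cells μ, AttackOrd u v ∧ g v = g u

/-- The chosen cell: the candidate cell that is last in reading order. -/
def pickC (μ : List ℕ) (g : ℕ × ℕ → ℕ) : ℕ × ℕ :=
  if h : (candC μ g).Nonempty then
    (((candC μ g).image (keyC μ)).min' (h.image _) / Kof μ,
     Kof μ - ((candC μ g).image (keyC μ)).min' (h.image _) % Kof μ)
  else (0, 0)

lemma decode_key {μ : List ℕ} {u : ℕ × ℕ} (hu : u ∈ cells μ) :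
    (keyC μ u / Kof μ, Kof μ - keyC μ u % Kof μ) = u := by
  obtain ⟨h1, h2, h3⟩ := mem_cells_bounds hu
  have h3' : u.2 + 2 ≤ Kof μ := by unfold Kof; omega
  have h4 : Kof μ - u.2 < Kof μ := by omega
  unfold keyC
  rw [Nat.mul_add_div (by omega), Nat.mul_add_mod, Nat.div_eq_of_lt h4, Nat.mod_eq_of_lt h4]
  exact Prod.ext_iff.mpr ⟨by omega, by omega⟩

lemma pickC_spec {μ : List ℕ} {g : ℕ × ℕ → ℕ} (h : (candC μ g).Nonempty) :
    pickC μ g ∈ candC μ g ∧ ∀ w ∈ candC μ g, keyC μ (pickC μ g) ≤ keyC μ w := by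
  obtain ⟨u₀, hu₀, hkey⟩ := Finset.mem_image.mp
    (Finset.min'_mem ((candC μ g).image (keyC μ)) (h.image _))
  have hu₀c : u₀ ∈ cells μ := (Finset.mem_filter.mp hu₀).1
  have hdec : pickC μ g = u₀ := by
    unfold pickC
    rw [dif_pos h, ← hkey]
    exact decode_key hu₀c
  rw [hdec]
  refine ⟨hu₀, fun w hw => ?_⟩
  rw [hkey]
  exact Finset.min'_le _ _ (Finset.mem_image_of_mem _ hw)

end PsiAux
section PsiAux2

lemma sAbs_eq_iff {x y : SLetter} : sAbs x = sAbs y ↔ x.1 = y.1 := by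
  unfold sAbs; omega

/-- The key properties of the chosen cell of an attacking filling. -/
lemma pick_props {μ : List ℕ} {σ : ℕ × ℕ → SLetter} (h : ¬ NonAttacking μ σ) :
    ∃ v, pickC μ (fun x => sAbs (σ x)) ∈ cells μ ∧ v ∈ cells μ ∧
      AttackOrd (pickC μ (fun x => sAbs (σ x))) v ∧
      (σ v).1 = (σ (pickC μ (fun x => sAbs (σ x)))).1 ∧
      (∀ w ∈ cells μ, AttackOrd (pickC μ (fun x => sAbs (σ x))) w →
        (σ w).1 = (σ (pickC μ (fun x => sAbs (σ x)))).1 → w = v) ∧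
      (∀ _ : ((pickC μ (fun x => sAbs (σ x))).1 - 1, (pickC μ (fun x => sAbs (σ x))).2) ∈ cells μ,
        (σ ((pickC μ (fun x => sAbs (σ x))).1 - 1, (pickC μ (fun x => sAbs (σ x))).2)).1
           ≠ (σ (pickC μ (fun x => sAbs (σ x)))).1) := by
  set g : ℕ × ℕ → ℕ := fun x => sAbs (σ x) with hg
  have hne : (candC μ g).Nonempty := by
    unfold NonAttacking at h
    push_neg at h
    obtain ⟨u, hu, v, hv, hat, habs⟩ := h
    rcases hat with hat | hat
    · exact ⟨u, Finset.mem_filter.mpr ⟨hu, v, hv, hat, habs.symm⟩⟩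
    · exact ⟨v, Finset.mem_filter.mpr ⟨hv, u, hu, hat, habs⟩⟩
  obtain ⟨hmem, hmin⟩ := pickC_spec hne
  set c := pickC μ g with hc
  obtain ⟨hcc, v, hvc, hattack, habs⟩ := Finset.mem_filter.mp hmem
  have hnot : ∀ x ∈ cells μ, AttackOrd c x → x ∉ candC μ g := fun x hx hax hmem2 =>
    absurd (hmin x hmem2) (not_le.mpr (key_lt hcc hx hax))
  have habs' : (σ v).1 = (σ c).1 := sAbs_eq_iff.mp habs
  refine ⟨v, hcc, hvc, hattack, habs', ?_, ?_⟩
  · intro w hw haw hwabs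
    by_contra hwv
    rcases attackOrd_or haw hattack hwv with h2 | h2
    · exact hnot w hw haw (Finset.mem_filter.mpr
        ⟨hw, v, hvc, h2, sAbs_eq_iff.mpr (habs'.trans hwabs.symm)⟩)
    · exact hnot v hvc hattack (Finset.mem_filter.mpr
        ⟨hvc, w, hw, h2, sAbs_eq_iff.mpr (hwabs.trans habs'.symm)⟩)
  · intro hb hbabs
    have hb1 : 1 ≤ c.1 - 1 := (mem_cells_bounds hb).1
    have hvb : AttackOrd v (c.1 - 1, c.2) := by
      rcases hattack with ⟨h1, h2⟩ | ⟨h1, h2⟩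
      · exact Or.inr ⟨by omega, by simpa using h2⟩
      · exact Or.inl ⟨by omega, by simpa using h2⟩
    exact hnot v hvc hattack (Finset.mem_filter.mpr
      ⟨hvc, (c.1 - 1, c.2), hb, hvb, sAbs_eq_iff.mpr (hbabs.trans habs'.symm)⟩)

/-- Flip the bar of the entry at cell `c`. -/
def flipAt (σ : ℕ × ℕ → SLetter) (c : ℕ × ℕ) : ℕ × ℕ → SLetter :=
  fun x => if x = c then ((σ c).1, !(σ c).2) else σ x

lemma flipAt_fst (σ : ℕ × ℕ → SLetter) (c x : ℕ × ℕ) : (flipAt σ c x).1 = (σ x).1 := by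
  unfold flipAt; split
  · rename_i h; rw [h]
  · rfl

lemma flipAt_ne (σ : ℕ × ℕ → SLetter) {c x : ℕ × ℕ} (h : x ≠ c) : flipAt σ c x = σ x :=
  if_neg h

lemma flipAt_self (σ : ℕ × ℕ → SLetter) (c : ℕ × ℕ) :
    flipAt σ c c = ((σ c).1, !(σ c).2) := if_pos rfl

/-- Exchanging one point of a filtered set. -/
lemma card_filter_flip {α : Type} [DecidableEq α] (s : Finset α) (p q : α → Prop)
    [DecidablePred p] [DecidablePred q] (a : α) (ha : a ∈ s)
    (h : ∀ x ∈ s, x ≠ a → (p x ↔ q x)) :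
    (s.filter p).card + (if q a then 1 else 0) = (s.filter q).card + (if p a then 1 else 0) := by
  rw [Finset.card_filter, Finset.card_filter, ← Finset.add_sum_erase s _ ha,
    ← Finset.add_sum_erase s _ ha]
  have he : (∑ x ∈ s.erase a, if p x then 1 else 0) = ∑ x ∈ s.erase a, if q x then 1 else 0 :=
    Finset.sum_congr rfl fun x hx => if_congr
      (h x (Finset.mem_of_mem_erase hx) (Finset.ne_of_mem_erase hx)) rfl rfl
  omega

end PsiAux2
section PsiAux3

variable {μ : List ℕ} {σ : ℕ × ℕ → SLetter} {c v : ℕ × ℕ}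

/-- Invariance of the inversion condition on pairs other than `(c,v)`. -/
lemma ind_flip_pair (hc : c ∈ cells μ) (hv : v ∈ cells μ) (hcv : AttackOrd c v)
    (habs : (σ v).1 = (σ c).1)
    (huniq : ∀ w ∈ cells μ, AttackOrd c w → (σ w).1 = (σ c).1 → w = v)
    (x : (ℕ × ℕ) × (ℕ × ℕ)) (hx : x ∈ (cells μ) ×ˢ (cells μ)) (hne : x ≠ (c, v)) :
    (AttackOrd x.1 x.2 ∧ IndOf lt1 (flipAt σ c x.1) (flipAt σ c x.2)) ↔
      (AttackOrd x.1 x.2 ∧ IndOf lt1 (σ x.1) (σ x.2)) := by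
  obtain ⟨hx1, hx2⟩ := Finset.mem_product.mp hx
  refine and_congr_right fun hatt => ?_
  by_cases h1 : x.1 = c
  · have h2 : x.2 ≠ c := fun he => attackOrd_ne hatt (h1.trans he.symm)
    have h3 : (σ x.2).1 ≠ (σ c).1 := by
      intro he
      exact hne (Prod.ext_iff.mpr ⟨h1, huniq x.2 hx2 (h1 ▸ hatt) he⟩)
    rw [h1, flipAt_self, flipAt_ne σ h2, ind_abs_ne (by simpa using fun he => h3 he.symm),
      ind_abs_ne (fun he => h3 he.symm)]
  · rw [flipAt_ne σ h1]
    by_cases h2 : x.2 = c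
    · rw [h2, flipAt_self]
      by_cases h3 : (σ x.1).1 = (σ c).1
      · rw [ind_abs_eq (by simpa using h3), ind_abs_eq h3]
      · rw [ind_abs_ne (by simpa using h3), ind_abs_ne h3]
    · rw [flipAt_ne σ h2]

/-- Invariance of the descent set. -/
lemma desCells_flip (hc : c ∈ cells μ)
    (hbelow : ∀ _ : (c.1 - 1, c.2) ∈ cells μ, (σ (c.1 - 1, c.2)).1 ≠ (σ c).1) :
    desCells μ (IndOf lt1) (flipAt σ c) = desCells μ (IndOf lt1) σ := by
  unfold desCells
  ext w
  simp only [Finset.mem_filter]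
  refine and_congr_right fun hw => and_congr_right fun hbw => ?_
  have hw1 : 1 ≤ (w.1 - 1, w.2).1 := (mem_cells_bounds hbw).1
  have hwb : w ≠ (w.1 - 1, w.2) := by
    intro he
    have := congrArg Prod.fst he
    simp only at this
    omega
  by_cases h1 : w = c
  · subst h1
    rw [flipAt_self, flipAt_ne σ (fun he => (hwb he.symm).elim)]
    · have h3 := hbelow hbw
      rw [ind_abs_ne (by simpa using fun he => h3 he.symm),
        ind_abs_ne (fun he => h3 he.symm)]
  · rw [flipAt_ne σ h1]
    by_cases h2 : (w.1 - 1, w.2) = c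
    · rw [h2, flipAt_self]
      by_cases h3 : (σ w).1 = (σ c).1
      · rw [ind_abs_eq (by simpa using h3), ind_abs_eq h3]
      · rw [ind_abs_ne (by simpa using h3), ind_abs_ne h3]
    · rw [flipAt_ne σ h2]

lemma negCount_flip (hc : c ∈ cells μ) :
    negCount μ (flipAt σ c) + (if (σ c).2 = true then 1 else 0)
      = negCount μ σ + (if (!(σ c).2) = true then 1 else 0) := by
  unfold negCount
  have hx : ∀ x ∈ cells μ, x ≠ c → ((flipAt σ c x).2 = true ↔ (σ x).2 = true) :=
    fun x _ hxc => by rw [flipAt_ne σ hxc]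
  have hmain := card_filter_flip (cells μ) (fun u => (flipAt σ c u).2 = true)
    (fun u => (σ u).2 = true) c hc hx
  have h2 : ((flipAt σ c c).2 = true) ↔ ((!(σ c).2) = true) := by rw [flipAt_self]
  rw [if_congr h2 rfl rfl] at hmain
  exact hmain

lemma posCount_flip (hc : c ∈ cells μ) :
    posCount μ (flipAt σ c) + (if (σ c).2 = false then 1 else 0)
      = posCount μ σ + (if (!(σ c).2) = false then 1 else 0) := by
  unfold posCount
  have hx : ∀ x ∈ cells μ, x ≠ c → ((flipAt σ c x).2 = false ↔ (σ x).2 = false) :=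
    fun x _ hxc => by rw [flipAt_ne σ hxc]
  have hmain := card_filter_flip (cells μ) (fun u => (flipAt σ c u).2 = false)
    (fun u => (σ u).2 = false) c hc hx
  have h2 : ((flipAt σ c c).2 = false) ↔ ((!(σ c).2) = false) := by rw [flipAt_self]
  rw [if_congr h2 rfl rfl] at hmain
  exact hmain

lemma invPairs_flip_card (hc : c ∈ cells μ) (hv : v ∈ cells μ) (hcv : AttackOrd c v)
    (habs : (σ v).1 = (σ c).1)
    (huniq : ∀ w ∈ cells μ, AttackOrd c w → (σ w).1 = (σ c).1 → w = v) :
    (invPairs μ (IndOf lt1) (flipAt σ c)).card + (if (σ c).2 = true then 1 else 0)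
      = (invPairs μ (IndOf lt1) σ).card + (if (!(σ c).2) = true then 1 else 0) := by
  unfold invPairs
  have hvc : v ≠ c := fun he => attackOrd_ne hcv he.symm
  have hmain := card_filter_flip ((cells μ) ×ˢ (cells μ))
    (fun x => AttackOrd x.1 x.2 ∧ IndOf lt1 (flipAt σ c x.1) (flipAt σ c x.2))
    (fun x => AttackOrd x.1 x.2 ∧ IndOf lt1 (σ x.1) (σ x.2))
    (c, v) (Finset.mem_product.mpr ⟨hc, hv⟩)
    (ind_flip_pair hc hv hcv habs huniq)
  have h1 : (AttackOrd c v ∧ IndOf lt1 (σ c) (σ v)) ↔ ((σ c).2 = true) := by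
    rw [ind_abs_eq habs.symm]
    simp [hcv]
  have h2 : (AttackOrd c v ∧ IndOf lt1 (flipAt σ c c) (flipAt σ c v)) ↔
      ((!(σ c).2) = true) := by
    rw [flipAt_self, flipAt_ne σ hvc, ind_abs_eq (by simpa using habs.symm)]
    simp [hcv]
  rw [if_congr h1 rfl rfl, if_congr h2 rfl rfl] at hmain
  exact hmain

end PsiAux3
section PsiAux4

/-- `Σ_{u ∈ Des(σ)} arm(u) ≤ |Inv(σ)|` for the order `<₁`. -/
lemma sum_arm_le (μ : List ℕ) (σ : ℕ × ℕ → SLetter) :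
    ∑ u ∈ desCells μ (IndOf lt1) σ, arm μ u ≤ (invPairs μ (IndOf lt1) σ).card := by
  classical
  set D := desCells μ (IndOf lt1) σ with hD
  set T := ((D ×ˢ cells μ).filter fun p => p.2.1 = p.1.1 ∧ p.1.2 < p.2.2) with hT
  have hTD : ∀ p ∈ T, Prod.fst p ∈ D := fun p hp =>
    (Finset.mem_product.mp (Finset.mem_filter.mp hp).1).1
  have h1 : T.card = ∑ u ∈ D, arm μ u := by
    rw [Finset.card_eq_sum_card_fiberwise hTD]
    refine Finset.sum_congr rfl fun u hu => ?_
    unfold arm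
    refine Finset.card_bij' (fun p _ => p.2) (fun w _ => (u, w)) ?_ ?_ ?_ ?_
    · intro p hp
      obtain ⟨hp1, hp2⟩ := Finset.mem_filter.mp hp
      obtain ⟨hmem, hrow, hcol⟩ := Finset.mem_filter.mp hp1
      obtain ⟨hpp, hpc⟩ := Finset.mem_product.mp hmem
      rw [hp2] at hrow hcol
      exact Finset.mem_filter.mpr ⟨hpc, hrow, hcol⟩
    · intro w hw
      obtain ⟨hwc, hwr, hwcol⟩ := Finset.mem_filter.mp hw
      exact Finset.mem_filter.mpr ⟨Finset.mem_filter.mpr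
        ⟨Finset.mem_product.mpr ⟨hu, hwc⟩, hwr, hwcol⟩, rfl⟩
    · intro p hp
      have hp2 := (Finset.mem_filter.mp hp).2
      exact Prod.ext_iff.mpr ⟨hp2.symm, rfl⟩
    · intro w _
      rfl
  rw [← h1]
  refine Finset.card_le_card_of_injOn
    (fun p => if IndOf lt1 (σ p.1) (σ p.2) then (p.1, p.2) else (p.2, (p.1.1 - 1, p.1.2)))
    ?_ ?_
  · intro p hp
    obtain ⟨hmem, hrow, hcol⟩ := Finset.mem_filter.mp hp
    obtain ⟨hp1, hp2⟩ := Finset.mem_product.mp hmem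
    obtain ⟨hc1, hcb, hind⟩ := Finset.mem_filter.mp hp1
    have hb1 : 1 ≤ (p.1.1 - 1, p.1.2).1 := (mem_cells_bounds hcb).1
    dsimp only
    split_ifs with hI
    · exact Finset.mem_filter.mpr ⟨Finset.mem_product.mpr ⟨hc1, hp2⟩,
        Or.inl ⟨hrow.symm, hcol⟩, hI⟩
    · refine Finset.mem_filter.mpr ⟨Finset.mem_product.mpr ⟨hp2, hcb⟩,
        Or.inr ⟨by simp only; omega, by simpa using hcol⟩, ?_⟩
      exact (ind_total (σ p.2) hind).resolve_left hI
  · intro p hp q hq heq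
    obtain ⟨hmemp, hrowp, hcolp⟩ := Finset.mem_filter.mp hp
    obtain ⟨hp1, hp2⟩ := Finset.mem_product.mp hmemp
    obtain ⟨hpc1, hpcb, _⟩ := Finset.mem_filter.mp hp1
    obtain ⟨hmemq, hrowq, hcolq⟩ := Finset.mem_filter.mp hq
    obtain ⟨hq1, hq2⟩ := Finset.mem_product.mp hmemq
    obtain ⟨hqc1, hqcb, _⟩ := Finset.mem_filter.mp hq1
    have hpb1 : 1 ≤ (p.1.1 - 1, p.1.2).1 := (mem_cells_bounds hpcb).1
    have hqb1 : 1 ≤ (q.1.1 - 1, q.1.2).1 := (mem_cells_bounds hqcb).1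
    simp only at hpb1 hqb1
    dsimp only at heq
    split_ifs at heq with h1 h2 h2
    · obtain ⟨e1, e2⟩ := Prod.ext_iff.mp heq
      exact Prod.ext_iff.mpr ⟨e1, e2⟩
    · obtain ⟨e1, e2⟩ := Prod.ext_iff.mp heq
      obtain ⟨e3, e4⟩ := Prod.ext_iff.mp e2
      have e5 := congrArg Prod.fst e1
      simp only at e3 e4 e5
      omega
    · obtain ⟨e1, e2⟩ := Prod.ext_iff.mp heq
      obtain ⟨e3, e4⟩ := Prod.ext_iff.mp e2
      have e5 := congrArg Prod.fst e1
      simp only at e3 e4 e5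
      omega
    · obtain ⟨e1, e2⟩ := Prod.ext_iff.mp heq
      obtain ⟨e3, e4⟩ := Prod.ext_iff.mp e2
      have e5 := congrArg Prod.fst e1
      simp only at e3 e4 e5
      have : p.1 = q.1 := Prod.ext_iff.mpr ⟨by omega, e4⟩
      exact Prod.ext_iff.mpr ⟨this, e1⟩
end PsiAux4
section PsiAux5

variable {μ : List ℕ} {N : ℕ}

/-- The cancellation involution on super fillings: flip the bar at the chosen cell. -/
def iotaF (μ : List ℕ) {N : ℕ} (f : {u // u ∈ cells μ} → Fin N × Bool) :
    {u // u ∈ cells μ} → Fin N × Bool :=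
  fun u => if (u : ℕ × ℕ) = pickC μ (fun x => sAbs (superFill μ f x)) then
    ((f u).1, !(f u).2) else f u

lemma superFill_iota_fst (f : {u // u ∈ cells μ} → Fin N × Bool) (x : ℕ × ℕ) :
    (superFill μ (iotaF μ f) x).1 = (superFill μ f x).1 := by
  unfold superFill extendF
  by_cases hx : x ∈ cells μ
  · rw [dif_pos hx, dif_pos hx]
    unfold iotaF
    dsimp only
    split <;> rfl
  · rw [dif_neg hx, dif_neg hx]

lemma abs_iota (f : {u // u ∈ cells μ} → Fin N × Bool) (x : ℕ × ℕ) :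
    sAbs (superFill μ (iotaF μ f) x) = sAbs (superFill μ f x) := by
  unfold sAbs; rw [superFill_iota_fst]

lemma pick_iota (f : {u // u ∈ cells μ} → Fin N × Bool) :
    pickC μ (fun x => sAbs (superFill μ (iotaF μ f) x))
      = pickC μ (fun x => sAbs (superFill μ f x)) := by
  congr 1
  funext x
  exact abs_iota f x

lemma iota_invol (f : {u // u ∈ cells μ} → Fin N × Bool) : iotaF μ (iotaF μ f) = f := by
  funext u
  show (if (u : ℕ × ℕ) = pickC μ (fun x => sAbs (superFill μ (iotaF μ f) x)) then
    ((iotaF μ f u).1, !(iotaF μ f u).2) else iotaF μ f u) = f u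
  rw [pick_iota]
  by_cases h : (u : ℕ × ℕ) = pickC μ (fun x => sAbs (superFill μ f x))
  · rw [if_pos h]
    have h2 : iotaF μ f u = ((f u).1, !(f u).2) := by
      show (if (u : ℕ × ℕ) = pickC μ (fun x => sAbs (superFill μ f x)) then
        ((f u).1, !(f u).2) else f u) = _
      rw [if_pos h]
    rw [h2]
    simp
  · rw [if_neg h]
    show (if (u : ℕ × ℕ) = pickC μ (fun x => sAbs (superFill μ f x)) then
      ((f u).1, !(f u).2) else f u) = f u
    rw [if_neg h]

lemma superFill_mem (g : {u // u ∈ cells μ} → Fin N × Bool) {x : ℕ × ℕ} (hx : x ∈ cells μ) :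
    superFill μ g x = (((g ⟨x, hx⟩).1 : ℕ), (g ⟨x, hx⟩).2) := by
  unfold superFill extendF
  exact dif_pos hx

lemma superFill_not_mem (g : {u // u ∈ cells μ} → Fin N × Bool) {x : ℕ × ℕ}
    (hx : x ∉ cells μ) : superFill μ g x = (0, false) := by
  unfold superFill extendF
  exact dif_neg hx

lemma superFill_iota_eq (f : {u // u ∈ cells μ} → Fin N × Bool)
    (hm : pickC μ (fun x => sAbs (superFill μ f x)) ∈ cells μ) :
    superFill μ (iotaF μ f) = flipAt (superFill μ f) (pickC μ (fun x => sAbs (superFill μ f x))) := by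
  funext x
  by_cases hx2 : x ∈ cells μ
  · by_cases hx : x = pickC μ (fun x => sAbs (superFill μ f x))
    · rw [hx] at hx2 ⊢
      rw [flipAt_self, superFill_mem (iotaF μ f) hx2, superFill_mem f hx2]
      show ((iotaF μ f ⟨_, hx2⟩).1.val, (iotaF μ f ⟨_, hx2⟩).2) = _
      unfold iotaF
      rw [if_pos rfl]
    · rw [flipAt_ne _ hx, superFill_mem (iotaF μ f) hx2, superFill_mem f hx2]
      show ((iotaF μ f ⟨_, hx2⟩).1.val, (iotaF μ f ⟨_, hx2⟩).2) = _
      unfold iotaF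
      rw [if_neg (by exact hx)]
  · have hxp : x ≠ pickC μ (fun x => sAbs (superFill μ f x)) := fun he => hx2 (by rw [he]; exact hm)
    rw [flipAt_ne _ hxp, superFill_not_mem (iotaF μ f) hx2, superFill_not_mem f hx2]

lemma nonAttacking_congr_abs {σ σ' : ℕ × ℕ → SLetter}
    (h : ∀ x, sAbs (σ' x) = sAbs (σ x)) : NonAttacking μ σ' ↔ NonAttacking μ σ := by
  unfold NonAttacking
  refine ⟨fun H u hu v hv ha => ?_, fun H u hu v hv ha => ?_⟩
  · have := H u hu v hv ha; rwa [h u, h v] at this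
  · rw [h u, h v]; exact H u hu v hv ha

lemma neg_one_pow_cases {R : Type} [CommRing R] {m n : ℕ} (h : m = n + 1 ∨ n = m + 1) :
    ((-1 : R)) ^ m = -(-1 : R) ^ n := by
  rcases h with h | h
  · subst h; rw [pow_succ]; ring
  · subst h; rw [pow_succ]; ring

/-- The weights of `f` and `iotaF μ f` cancel for attacking `f`. -/
lemma weight_add_iota (μ : List ℕ) (N : ℕ) (f : {u // u ∈ cells μ} → Fin N × Bool)
    (hna : ¬ NonAttacking μ (superFill μ f)) :
    ((-1 : MvPolynomial (Fin N) (MvPolynomial (Fin 2) ℤ)) ^ negCount μ (superFill μ f) *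
        C ((X 0 : MvPolynomial (Fin 2) ℤ) ^
              (posCount μ (superFill μ f) + invStat μ (IndOf lt1) (superFill μ f)) *
           (X 1 : MvPolynomial (Fin 2) ℤ) ^ majStat μ (IndOf lt1) (superFill μ f)) *
        ∏ u, X ((f u).1)) +
      ((-1 : MvPolynomial (Fin N) (MvPolynomial (Fin 2) ℤ)) ^
            negCount μ (superFill μ (iotaF μ f)) *
        C ((X 0 : MvPolynomial (Fin 2) ℤ) ^
              (posCount μ (superFill μ (iotaF μ f)) +
                invStat μ (IndOf lt1) (superFill μ (iotaF μ f))) *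
           (X 1 : MvPolynomial (Fin 2) ℤ) ^ majStat μ (IndOf lt1) (superFill μ (iotaF μ f))) *
        ∏ u, X (((iotaF μ f) u).1)) = 0 := by
  obtain ⟨v, hcc, hvc, hattack, habs, huniq, hbelow⟩ := pick_props hna
  set σ := superFill μ f with hσ
  set c := pickC μ (fun x => sAbs (σ x)) with hc
  have hfl : superFill μ (iotaF μ f) = flipAt σ c := superFill_iota_eq f hcc
  have hdes := desCells_flip (σ := σ) hcc hbelow
  have hinv := invPairs_flip_card hcc hvc hattack habs huniq
  have hnegc := negCount_flip (σ := σ) hcc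
  have hposc := posCount_flip (σ := σ) hcc
  have harm1 := sum_arm_le μ σ
  have harm2 := sum_arm_le μ (flipAt σ c)
  have harm_eq : ∑ u ∈ desCells μ (IndOf lt1) (flipAt σ c), arm μ u
      = ∑ u ∈ desCells μ (IndOf lt1) σ, arm μ u := by rw [hdes]
  rw [harm_eq] at harm2
  have hmaj : majStat μ (IndOf lt1) (flipAt σ c) = majStat μ (IndOf lt1) σ := by
    unfold majStat; rw [hdes]
  have hexp : posCount μ (flipAt σ c) + invStat μ (IndOf lt1) (flipAt σ c)
      = posCount μ σ + invStat μ (IndOf lt1) σ := by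
    unfold invStat
    rw [harm_eq]
    cases hb : (σ c).2 <;> simp [hb] at hnegc hposc hinv <;> omega
  have hsign : ((-1 : MvPolynomial (Fin N) (MvPolynomial (Fin 2) ℤ)) ^ negCount μ (flipAt σ c))
      = -(-1 : MvPolynomial (Fin N) (MvPolynomial (Fin 2) ℤ)) ^ negCount μ σ := by
    apply neg_one_pow_cases
    cases hb : (σ c).2 <;> simp [hb] at hnegc <;> omega
  have hprod : (∏ u, (X (((iotaF μ f) u).1) : MvPolynomial (Fin N) (MvPolynomial (Fin 2) ℤ)))
      = ∏ u, X ((f u).1) := by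
    refine Finset.prod_congr rfl fun u _ => ?_
    unfold iotaF
    split <;> rfl
  rw [hfl, hmaj, hexp, hsign, hprod]
  ring

end PsiAux5


/-- With the order `<₁` on the super alphabet,
`Σ_σ (−1)^{m(σ)} q^{p(σ)+inv(σ)} t^{maj(σ)} x^{|σ|}` over all super fillings
`σ : dg(μ) → A` with `|σ(u)| ≤ N` equals the same sum restricted to
non-attacking super fillings. -/
theorem psi_cancellation_to_nonattacking (μ : List ℕ) (hμ : IsPartitionList μ)
    (N : ℕ) (hN : 1 ≤ N) :
    ∑ f : {u // u ∈ cells μ} → Fin N × Bool,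
      ((-1 : MvPolynomial (Fin N) (MvPolynomial (Fin 2) ℤ)) ^ negCount μ (superFill μ f) *
        C ((X 0 : MvPolynomial (Fin 2) ℤ) ^
              (posCount μ (superFill μ f) + invStat μ (IndOf lt1) (superFill μ f)) *
           (X 1 : MvPolynomial (Fin 2) ℤ) ^ majStat μ (IndOf lt1) (superFill μ f)) *
        ∏ u, X ((f u).1))
    = ∑ f ∈ Finset.univ.filter (fun f : {u // u ∈ cells μ} → Fin N × Bool =>
          NonAttacking μ (superFill μ f)),
        ((-1 : MvPolynomial (Fin N) (MvPolynomial (Fin 2) ℤ)) ^ negCount μ (superFill μ f) *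
          C ((X 0 : MvPolynomial (Fin 2) ℤ) ^
                (posCount μ (superFill μ f) + invStat μ (IndOf lt1) (superFill μ f)) *
             (X 1 : MvPolynomial (Fin 2) ℤ) ^ majStat μ (IndOf lt1) (superFill μ f)) *
          ∏ u, X ((f u).1)) := by
  classical
  rw [← Finset.sum_filter_add_sum_filter_not Finset.univ
    (fun f : {u // u ∈ cells μ} → Fin N × Bool => NonAttacking μ (superFill μ f))]
  have hz : ∑ f ∈ Finset.univ.filter (fun f : {u // u ∈ cells μ} → Fin N × Bool =>
      ¬ NonAttacking μ (superFill μ f)),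
      ((-1 : MvPolynomial (Fin N) (MvPolynomial (Fin 2) ℤ)) ^ negCount μ (superFill μ f) *
        C ((X 0 : MvPolynomial (Fin 2) ℤ) ^
              (posCount μ (superFill μ f) + invStat μ (IndOf lt1) (superFill μ f)) *
           (X 1 : MvPolynomial (Fin 2) ℤ) ^ majStat μ (IndOf lt1) (superFill μ f)) *
        ∏ u, X ((f u).1)) = 0 := by
    refine Finset.sum_involution (fun a _ => iotaF μ a) ?_ ?_ ?_ ?_
    · intro a ha
      exact weight_add_iota μ N a (Finset.mem_filter.mp ha).2
    · intro a ha _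
      have hna := (Finset.mem_filter.mp ha).2
      obtain ⟨v, hcc, _⟩ := pick_props hna
      intro he
      have h2 := congrFun he ⟨pickC μ (fun x => sAbs (superFill μ a x)), hcc⟩
      unfold iotaF at h2
      simp at h2
      have h3 := congrArg Prod.snd h2
      simp at h3
    · intro a ha
      have hna := (Finset.mem_filter.mp ha).2
      exact Finset.mem_filter.mpr ⟨Finset.mem_univ _,
        fun hNA => hna ((nonAttacking_congr_abs (abs_iota a)).mp hNA)⟩
    · intro a _
      exact iota_invol a
  rw [hz, add_zero]

end HHL
end

section
/- Let μ be a partition and let σ : dg(μ) → A be a non-attacking super filling, i.e. |σ(u)| ≠ |σ(v)| for every pair of attacking cells u, v. Then for every j ≥ 1, the number of cells u ∈ dg(μ) with |σ(u)| ≤ j is at most μ'_1 + μ'_2 + ⋯ + μ'_j = Σ_i min(μ_i, j). In particular, if ρ is a partition of n = |μ| with ρ_k = #{u ∈ dg(μ) : |σ(u)| = k} for all k, then ρ ≤ μ' in dominance order. -/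
open Finset MvPolynomial

namespace HHL

lemma mem_cells_iff' {μ : List ℕ} {u : ℕ × ℕ} (h : u ∈ cells μ) :
    1 ≤ u.1 ∧ u.1 ≤ μ.length ∧ 1 ≤ u.2 ∧ u.2 ≤ μ.getD (u.1 - 1) 0 := by
  simp only [cells, Finset.mem_filter, Finset.mem_product, Finset.mem_Icc] at h
  exact ⟨h.1.1.1, h.1.1.2, h.1.2.1, h.2⟩

lemma one_le_sAbs (x : SLetter) : 1 ≤ sAbs x := by simp [sAbs]

lemma count_le (μ : List ℕ) (σ : ℕ × ℕ → SLetter) (hna : NonAttacking μ σ) (j : ℕ) :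
    ((cells μ).filter fun u => sAbs (σ u) ≤ j).card
      ≤ ∑ i ∈ Finset.range μ.length, min (μ.getD i 0) j := by
  set S := (cells μ).filter fun u => sAbs (σ u) ≤ j with hS
  have hmem : ∀ u ∈ S, u ∈ cells μ ∧ sAbs (σ u) ≤ j := by
    intro u hu; exact Finset.mem_filter.mp hu
  have hcard : S.card = ∑ i ∈ Finset.range μ.length,
      (S.filter fun u => u.1 - 1 = i).card := by
    apply Finset.card_eq_sum_card_fiberwise
    intro u hu
    obtain ⟨hu1, hu2⟩ := hmem u hu
    have := mem_cells_iff' hu1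
    simp only [Finset.mem_coe, Finset.mem_range]
    omega
  rw [hcard]
  apply Finset.sum_le_sum
  intro i hi
  apply le_min
  · -- at most μ_i cells in row i+1
    have : ((S.filter fun u => u.1 - 1 = i).card ≤ (Finset.Icc 1 (μ.getD i 0)).card) := by
      apply Finset.card_le_card_of_injOn (fun u => u.2)
      · intro u hu
        simp only [Finset.mem_coe, Finset.mem_filter] at hu
        obtain ⟨hu1, hui⟩ := hu
        obtain ⟨hc, _⟩ := hmem u hu1
        have h := mem_cells_iff' hc
        rw [hui] at h
        exact Finset.mem_Icc.mpr ⟨h.2.2.1, h.2.2.2⟩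
      · intro u hu v hv huv
        simp only [Finset.mem_coe, Finset.mem_filter] at hu hv
        obtain ⟨hc, _⟩ := hmem u hu.1
        obtain ⟨hc', _⟩ := hmem v hv.1
        have h1 := mem_cells_iff' hc
        have h2 := mem_cells_iff' hc'
        have : u.1 = v.1 := by omega
        exact Prod.ext this huv
    rw [Nat.card_Icc] at this
    omega
  · -- at most j distinct absolute values
    have : ((S.filter fun u => u.1 - 1 = i).card ≤ (Finset.Icc 1 j).card) := by
      apply Finset.card_le_card_of_injOn (fun u => sAbs (σ u))
      · intro u hu
        simp only [Finset.mem_coe, Finset.mem_filter] at hu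
        obtain ⟨hc, hj⟩ := hmem u hu.1
        exact Finset.mem_Icc.mpr ⟨one_le_sAbs _, hj⟩
      · intro u hu v hv huv
        simp only [Finset.mem_coe, Finset.mem_filter] at hu hv
        obtain ⟨hc, _⟩ := hmem u hu.1
        obtain ⟨hc', _⟩ := hmem v hv.1
        have h1 := mem_cells_iff' hc
        have h2 := mem_cells_iff' hc'
        have hrow : u.1 = v.1 := by omega
        by_contra hne
        have hcol : u.2 ≠ v.2 := by
          intro h; exact hne (Prod.ext hrow h)
        have hatt : Attack u v := by
          rcases Nat.lt_or_ge u.2 v.2 with h | h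
          · exact Or.inl (Or.inl ⟨hrow, h⟩)
          · exact Or.inr (Or.inl ⟨hrow.symm, lt_of_le_of_ne h (fun e => hcol e.symm)⟩)
        exact hna u hc v hc' hatt huv
    rw [Nat.card_Icc] at this
    omega

lemma conj_sum (μ : List ℕ) (m : ℕ) :
    ∑ j ∈ Finset.range m, conj μ (j + 1)
      = ∑ i ∈ Finset.range μ.length, min (μ.getD i 0) m := by
  unfold conj
  simp_rw [Finset.card_filter]
  rw [Finset.sum_comm]
  apply Finset.sum_congr rfl
  intro i _
  induction m with
  | zero => simp
  | succ n ih =>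
      rw [Finset.sum_range_succ, ih]
      rcases Nat.lt_or_ge n (μ.getD i 0) with h | h
      · rw [if_pos (by omega)]; omega
      · rw [if_neg (by omega)]; omega

/-- If `σ : dg(μ) → A` is a non-attacking super filling, then
for every `j ≥ 1` the number of cells `u` with `|σ(u)| ≤ j` is at most
`μ'_1 + ⋯ + μ'_j = Σ_i min(μ_i, j)`; in particular, if `ρ` is a partition of
`n = |μ|` with `ρ_k = #{u : |σ(u)| = k}` for all `k`, then `ρ ≤ μ'` in
dominance order. -/
theorem nonattacking_dominance (μ : List ℕ) (hμ : IsPartitionList μ)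
    (σ : ℕ × ℕ → SLetter) (hna : NonAttacking μ σ) :
    (∀ j, 1 ≤ j →
        ((cells μ).filter fun u => sAbs (σ u) ≤ j).card
          ≤ ∑ i ∈ Finset.range μ.length, min (μ.getD i 0) j) ∧
    ∀ ρ : List ℕ, IsPartitionList ρ → ρ.sum = μ.sum →
      (∀ k, 1 ≤ k →
        ρ.getD (k - 1) 0 = ((cells μ).filter fun u => sAbs (σ u) = k).card) →
      ∀ m, ∑ i ∈ Finset.range m, ρ.getD i 0 ≤ ∑ j ∈ Finset.range m, conj μ (j + 1) := by
  refine ⟨fun j _ => count_le μ σ hna j, ?_⟩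
  intro ρ _ _ hρ m
  have h1 : ∑ i ∈ Finset.range m, ρ.getD i 0
      = ((cells μ).filter fun u => sAbs (σ u) ≤ m).card := by
    have hfib : ((cells μ).filter fun u => sAbs (σ u) ≤ m).card
        = ∑ i ∈ Finset.range m,
          (((cells μ).filter fun u => sAbs (σ u) ≤ m).filter
            fun u => sAbs (σ u) - 1 = i).card := by
      apply Finset.card_eq_sum_card_fiberwise
      intro u hu
      simp only [Finset.mem_coe, Finset.mem_filter] at hu
      have := one_le_sAbs (σ u)
      simp only [Finset.mem_coe, Finset.mem_range]
      omega
    rw [hfib]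
    apply Finset.sum_congr rfl
    intro i hi
    simp only [Finset.mem_range] at hi
    rw [show ρ.getD i 0 = ((cells μ).filter fun u => sAbs (σ u) = i + 1).card by
      exact hρ (i + 1) (by omega)]
    congr 1
    rw [Finset.filter_filter]
    apply Finset.filter_congr
    intro u _
    have := one_le_sAbs (σ u)
    omega
  rw [h1, conj_sum]
  exact count_le μ σ hna m

end HHL
end
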